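/- arXiv:1509.07346 — 3 statements merged into one kernel-verified Lean document; each statement's English description precedes it below -/
import Mathlib

section
/- Let k ≥ n/2 + 1, x ∈ [n]^(k), and let i₁ < ... < i_t be the elements of x ∩ *(x). Let p(x) denote the unique element of the ∼-equivalence class (same signature) of x with |x| + |p(x)| = n. For b ∈ x and y = x \ {b}: one has p(x) ⊆ p(y) ⊆ y ⊆ x if and only if b = i_u for some u ∈ {1,...,2k−n}. In particular, in the poset (Q, <) defined by y < x iff p(x) ⊆ p(y) ⊆ y ⊆ x, each x ∈ [n]^(k) covers exactly 2k − n elements of [n]^(k−1). -/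
/-- `c_x(i,j) = |x ∩ [i,j]| - |[i,j] \ x|`. -/
def cfun (x : Finset ℕ) (i j : ℕ) : ℤ :=
  ((Finset.Icc i j ∩ x).card : ℤ) - ((Finset.Icc i j \ x).card : ℤ)

-- The signature value of position `i` in `x ⊆ [n]`: `1`, `0`, or `2` (for `*`).
open Classical in
noncomputable def sgv (n : ℕ) (x : Finset ℕ) (i : ℕ) : ℕ :=
  if i ∈ x then (if ∃ j ∈ Finset.Ioc i n, cfun x i j = 0 then 1 else 2)
  else (if ∃ j ∈ Finset.Ico 1 i, cfun x j i = 0 then 0 else 2)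


lemma cfun_eq_sum (z : Finset ℕ) (i j : ℕ) :
    cfun z i j = ∑ m ∈ Finset.Icc i j, (if m ∈ z then (1:ℤ) else -1) := by
  classical
  rw [cfun, Finset.sum_ite, Finset.sum_const, Finset.sum_const, ← Finset.sdiff_eq_filter]
  simp [Finset.filter_mem_eq_inter]
  ring

lemma cfun_bot (z : Finset ℕ) (i j : ℕ) (h : j < i) : cfun z i j = 0 := by
  rw [cfun_eq_sum, Finset.Icc_eq_empty (by omega), Finset.sum_empty]

lemma cfun_succ (z : Finset ℕ) (m : ℕ) :
    cfun z 1 (m+1) = cfun z 1 m + (if m+1 ∈ z then (1:ℤ) else -1) := by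
  rw [cfun_eq_sum, cfun_eq_sum, ← Finset.sum_Icc_succ_top (by omega)]

lemma cfun_split (z : Finset ℕ) (l j : ℕ) (hl : 1 ≤ l) (hlj : l ≤ j + 1) :
    cfun z l j = cfun z 1 j - cfun z 1 (l-1) := by
  rw [cfun_eq_sum, cfun_eq_sum, cfun_eq_sum]
  have h : Finset.Icc 1 j = Finset.Icc 1 (l-1) ∪ Finset.Icc l j := by
    ext m; simp [Finset.mem_Icc, Finset.mem_union]; omega
  have hd : Disjoint (Finset.Icc 1 (l-1)) (Finset.Icc l j) := by
    rw [Finset.disjoint_left]; intro m hm hm'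
    simp [Finset.mem_Icc] at hm hm'; omega
  rw [h, Finset.sum_union hd]; ring

lemma ivt_aux (f : ℕ → ℤ) (hstep : ∀ m, f (m+1) = f m + 1 ∨ f (m+1) = f m - 1)
    (a : ℕ) (c : ℤ) : ∀ b, a ≤ b → f a ≤ c → c ≤ f b → ∃ m, a ≤ m ∧ m ≤ b ∧ f m = c := by
  intro b
  induction b with
  | zero =>
    intro h1 h2 h3
    have ha : a = 0 := by omega
    subst ha
    exact ⟨0, le_refl _, le_refl _, by omega⟩
  | succ b ih =>
    intro h1 h2 h3
    rcases Nat.lt_or_ge a (b+1) with h | h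
    · rcases le_or_gt c (f b) with h4 | h4
      · obtain ⟨m, hm1, hm2, hm3⟩ := ih (by omega) h2 h4
        exact ⟨m, hm1, by omega, hm3⟩
      · have := hstep b
        exact ⟨b+1, by omega, le_refl _, by omega⟩
    · have ha : a = b + 1 := by omega
      subst ha
      exact ⟨b+1, le_refl _, le_refl _, by omega⟩

lemma ivt (f : ℕ → ℤ) (hstep : ∀ m, f (m+1) = f m + 1 ∨ f (m+1) = f m - 1)
    (a b : ℕ) (hab : a ≤ b) (c : ℤ) (ha : f a ≤ c) (hb : c ≤ f b) :
    ∃ m, a ≤ m ∧ m ≤ b ∧ f m = c :=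
  ivt_aux f hstep a c b hab ha hb

lemma ivt' (f : ℕ → ℤ) (hstep : ∀ m, f (m+1) = f m + 1 ∨ f (m+1) = f m - 1)
    (a b : ℕ) (hab : a ≤ b) (c : ℤ) (ha : c ≤ f a) (hb : f b ≤ c) :
    ∃ m, a ≤ m ∧ m ≤ b ∧ f m = c := by
  have hstep' : ∀ m, (fun m => -(f m)) (m+1) = (fun m => -(f m)) m + 1 ∨
      (fun m => -(f m)) (m+1) = (fun m => -(f m)) m - 1 := by
    intro m; rcases hstep m with h | h <;> simp only [h] <;> [right; left] <;> ring
  obtain ⟨m, h1, h2, h3⟩ := ivt (fun m => -(f m)) hstep' a b hab (-c)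
    (by simpa using ha) (by simpa using hb)
  exact ⟨m, h1, h2, by simpa using h3⟩

lemma last_min (f : ℕ → ℤ) (l : ℕ) : ∀ r, l ≤ r →
    ∃ m0, l ≤ m0 ∧ m0 ≤ r ∧ (∀ j, l ≤ j → j ≤ r → f m0 ≤ f j) ∧
      (∀ j, m0 < j → j ≤ r → f m0 < f j) := by
  intro r
  induction r with
  | zero =>
    intro h
    refine ⟨l, le_refl _, h, fun j h1 h2 => ?_, fun j h1 h2 => by omega⟩
    have : j = l := by omega
    subst this; exact le_refl _
  | succ r ih =>
    intro h
    rcases Nat.lt_or_ge l (r+1) with h' | h'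
    · obtain ⟨m0, h1, h2, h3, h4⟩ := ih (by omega)
      rcases lt_or_ge (f (r+1)) (f m0) with h5 | h5
      · refine ⟨r+1, by omega, le_refl _, fun j hj1 hj2 => ?_, fun j hj1 hj2 => by omega⟩
        rcases Nat.lt_or_ge j (r+1) with hj | hj
        · have := h3 j hj1 (by omega); omega
        · have hje : j = r+1 := by omega
          subst hje; exact le_refl _
      · rcases eq_or_lt_of_le h5 with h6 | h6
        · refine ⟨r+1, by omega, le_refl _, fun j hj1 hj2 => ?_, fun j hj1 hj2 => by omega⟩
          rcases Nat.lt_or_ge j (r+1) with hj | hj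
          · have := h3 j hj1 (by omega); omega
          · have hje : j = r+1 := by omega
            subst hje; exact le_refl _
        · refine ⟨m0, h1, by omega, fun j hj1 hj2 => ?_, fun j hj1 hj2 => ?_⟩
          · rcases Nat.lt_or_ge j (r+1) with hj | hj
            · exact h3 j hj1 (by omega)
            · have hje : j = r+1 := by omega
              subst hje; omega
          · rcases Nat.lt_or_ge j (r+1) with hj | hj
            · exact h4 j hj1 (by omega)
            · have hje : j = r+1 := by omega
              subst hje; omega
    · have hle : l = r + 1 := by omega
      subst hle
      refine ⟨r+1, le_refl _, le_refl _, fun j h1 h2 => ?_, fun j h1 h2 => by omega⟩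
      have : j = r+1 := by omega
      subst this; exact le_refl _

-- step at mem / not mem
lemma cfun_mem_step {z : Finset ℕ} {m : ℕ} (h1 : 1 ≤ m) (hm : m ∈ z) :
    cfun z 1 m = cfun z 1 (m-1) + 1 := by
  have := cfun_succ z (m-1)
  have e : m - 1 + 1 = m := by omega
  rw [e] at this
  rw [this, if_pos hm]

lemma cfun_notMem_step {z : Finset ℕ} {m : ℕ} (h1 : 1 ≤ m) (hm : m ∉ z) :
    cfun z 1 m = cfun z 1 (m-1) + -1 := by
  have := cfun_succ z (m-1)
  have e : m - 1 + 1 = m := by omega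
  rw [e] at this
  rw [this, if_neg hm]

lemma cfun_step (z : Finset ℕ) (m : ℕ) :
    cfun z 1 (m+1) = cfun z 1 m + 1 ∨ cfun z 1 (m+1) = cfun z 1 m - 1 := by
  by_cases h : m + 1 ∈ z
  · left; rw [cfun_succ, if_pos h]
  · right; rw [cfun_succ, if_neg h]; ring

-- sgv basics
lemma sgv_cases_mem {n : ℕ} {z : Finset ℕ} {i : ℕ} (hi : i ∈ z) :
    sgv n z i = 1 ∨ sgv n z i = 2 := by
  classical
  rw [sgv, if_pos hi]
  split <;> simp

lemma sgv_cases_notMem {n : ℕ} {z : Finset ℕ} {i : ℕ} (hi : i ∉ z) :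
    sgv n z i = 0 ∨ sgv n z i = 2 := by
  classical
  rw [sgv, if_neg hi]
  split <;> simp

lemma mem_of_sgv_one {n : ℕ} {z : Finset ℕ} {i : ℕ} (h : sgv n z i = 1) : i ∈ z := by
  by_contra hc
  rcases sgv_cases_notMem (n := n) hc with h' | h' <;> omega

lemma notMem_of_sgv_zero {n : ℕ} {z : Finset ℕ} {i : ℕ} (h : sgv n z i = 0) : i ∉ z := by
  intro hc
  rcases sgv_cases_mem (n := n) hc with h' | h' <;> omega

lemma sgv_one_iff {n : ℕ} {z : Finset ℕ} {i : ℕ} (hi : i ∈ z) :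
    sgv n z i = 1 ↔ ∃ j ∈ Finset.Ioc i n, cfun z i j = 0 := by
  classical
  rw [sgv, if_pos hi]
  split <;> simp_all <;> tauto

lemma sgv_two_iff_mem {n : ℕ} {z : Finset ℕ} {i : ℕ} (hi : i ∈ z) :
    sgv n z i = 2 ↔ ∀ j ∈ Finset.Ioc i n, cfun z i j ≠ 0 := by
  classical
  rw [sgv, if_pos hi]
  split <;> simp_all <;> tauto

lemma sgv_zero_iff {n : ℕ} {z : Finset ℕ} {i : ℕ} (hi : i ∉ z) :
    sgv n z i = 0 ↔ ∃ j ∈ Finset.Ico 1 i, cfun z j i = 0 := by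
  classical
  rw [sgv, if_neg hi]
  split <;> simp_all <;> tauto

lemma sgv_two_iff_notMem {n : ℕ} {z : Finset ℕ} {i : ℕ} (hi : i ∉ z) :
    sgv n z i = 2 ↔ ∀ j ∈ Finset.Ico 1 i, cfun z j i ≠ 0 := by
  classical
  rw [sgv, if_neg hi]
  split <;> simp_all <;> tauto

-- bound lemmas
lemma starone_bound {n : ℕ} {z : Finset ℕ} {b : ℕ} (h1 : 1 ≤ b) (hb : b ∈ z)
    (hs : ∀ j ∈ Finset.Ioc b n, cfun z b j ≠ 0) :
    ∀ m, b ≤ m → m ≤ n → cfun z 1 (b-1) + 1 ≤ cfun z 1 m := by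
  intro m
  induction m with
  | zero => intro h1 h2; omega
  | succ m ih =>
    intro hbm hmn
    rcases Nat.lt_or_ge m (b) with h | h
    · have : m + 1 = b := by omega
      rw [this, cfun_mem_step h1 hb]
    · have h2 := ih h (by omega)
      have h3 := cfun_step z m
      have h4 : cfun z (b) (m+1) ≠ 0 := hs _ (by simp [Finset.mem_Ioc]; omega)
      rw [cfun_split z b (m+1) h1 (by omega)] at h4
      omega

lemma starzero_bound {z : Finset ℕ} {b : ℕ} (h1 : 1 ≤ b) (hb : b ∉ z)
    (hs : ∀ j ∈ Finset.Ico 1 b, cfun z j b ≠ 0) :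
    ∀ m, m ≤ b - 1 → cfun z 1 b + 1 ≤ cfun z 1 m := by
  have key : ∀ d m, m + d = b - 1 → cfun z 1 b + 1 ≤ cfun z 1 m := by
    intro d
    induction d with
    | zero =>
      intro m hm
      have : m = b - 1 := by omega
      subst this
      rw [cfun_notMem_step h1 hb]; omega
    | succ d ih =>
      intro m hm
      have h2 := ih (m+1) (by omega)
      have h3 := cfun_step z m
      have h4 : cfun z (m+1) b ≠ 0 := hs _ (by simp [Finset.mem_Ico]; omega)
      rw [cfun_split z (m+1) b (by omega) (by omega)] at h4
      simp at h4
      omega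
  intro m hm
  exact key (b - 1 - m) m (by omega)

lemma star_order {n : ℕ} {z : Finset ℕ} {i j : ℕ} (hiI : i ∈ Finset.Icc 1 n)
    (hjI : j ∈ Finset.Icc 1 n) (hi : i ∈ z) (hsi : sgv n z i = 2)
    (hj : j ∉ z) (hsj : sgv n z j = 2) : j < i := by
  simp only [Finset.mem_Icc] at hiI hjI
  rcases Nat.lt_or_ge j i with h | h
  · exact h
  have hij : i < j := by rcases Nat.lt_or_ge i j with h' | h'; exact h'; 
                         have : i = j := by omega
                         subst this; exact absurd hi hj
  have b1 := starone_bound hiI.1 hi ((sgv_two_iff_mem hi).mp hsi) j (by omega) hjI.2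
  have b2 := starzero_bound hjI.1 hj ((sgv_two_iff_notMem hj).mp hsj) (i-1) (by omega)
  omega

-- if m0+1 < b (a star-one), and m0 is a strict-from-the-right minimum of g on [?, b-1],
-- then m0+1 is a star-one.
lemma star_of_strictmin {n : ℕ} {z : Finset ℕ} {b m0 : ℕ} (hb : b ∈ z) (hbn : b ≤ n)
    (h1b : 1 ≤ b)
    (hbs : ∀ j ∈ Finset.Ioc b n, cfun z b j ≠ 0)
    (hm0b : m0 + 1 < b)
    (hmin : ∀ j, m0 < j → j ≤ b - 1 → cfun z 1 m0 < cfun z 1 j) :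
    m0 + 1 ∈ z ∧ sgv n z (m0+1) = 2 := by
  have hstep := cfun_step z m0
  have hlt := hmin (m0+1) (by omega) (by omega)
  have hmem : m0 + 1 ∈ z := by
    rcases hstep with h | h
    · by_contra hc
      have := cfun_succ z m0
      rw [if_neg hc] at this
      omega
    · omega
  refine ⟨hmem, (sgv_two_iff_mem hmem).mpr ?_⟩
  intro j hj
  simp only [Finset.mem_Ioc] at hj
  rw [cfun_split z (m0+1) j (by omega) (by omega)]
  simp only [Nat.add_sub_cancel]
  rcases Nat.lt_or_ge j b with h | h
  · have := hmin j (by omega) (by omega)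
    omega
  · have h1 := starone_bound h1b hb hbs j h hj.2
    have h2 := hmin (b-1) (by omega) (by omega)
    omega

lemma lemA {n : ℕ} {z : Finset ℕ} {b l : ℕ} (hb : b ∈ z) (h1b : 1 ≤ b) (hbn : b ≤ n)
    (hbs : ∀ j ∈ Finset.Ioc b n, cfun z b j ≠ 0)
    (hl : 1 ≤ l) (hlb : l < b) (hc : cfun z l b = 2) :
    ∃ m, l ≤ m ∧ m < b ∧ m ∈ z ∧ sgv n z m = 2 := by
  rw [cfun_split z l b hl (by omega)] at hc
  have hgb : cfun z 1 b = cfun z 1 (b-1) + 1 := cfun_mem_step h1b hb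
  obtain ⟨m0, h1, h2, h3, h4⟩ := last_min (cfun z 1) (l-1) (b-1) (by omega)
  have hm0 : m0 < b - 1 := by
    rcases Nat.lt_or_ge m0 (b-1) with h | h
    · exact h
    · exfalso
      have he : m0 = b - 1 := by omega
      subst he
      have := h3 (l-1) (le_refl _) (by omega)
      omega
  obtain ⟨hmem, hstar⟩ := star_of_strictmin hb hbn h1b hbs (show m0 + 1 < b by omega) h4
  exact ⟨m0+1, by omega, by omega, hmem, hstar⟩

lemma lemB {n : ℕ} {z : Finset ℕ} {a b : ℕ} (ha : a ∈ z) (h1a : 1 ≤ a) (hab : a < b)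
    (hb : b ∈ z) (hbn : b ≤ n)
    (has : ∀ j ∈ Finset.Ioc a n, cfun z a j ≠ 0)
    (hbs : ∀ j ∈ Finset.Ioc b n, cfun z b j ≠ 0)
    (hno : ∀ m, a < m → m < b → m ∈ z → sgv n z m ≠ 2) :
    cfun z a b = 2 := by
  obtain ⟨m0, h1, h2, h3, h4⟩ := last_min (cfun z 1) a (b-1) (by omega)
  have hm0 : m0 = b - 1 := by
    rcases Nat.lt_or_ge m0 (b-1) with h | h
    · exfalso
      obtain ⟨hmem, hstar⟩ := star_of_strictmin hb hbn (by omega) hbs (show m0 + 1 < b by omega) h4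
      exact hno (m0+1) (by omega) (by omega) hmem hstar
    · omega
  subst hm0
  have hlow := starone_bound h1a ha has (b-1) (by omega) (by omega)
  have hup := h3 a (le_refl _) (by omega)
  have hga : cfun z 1 a = cfun z 1 (a-1) + 1 := cfun_mem_step h1a ha
  have hgb : cfun z 1 b = cfun z 1 (b-1) + 1 := cfun_mem_step (by omega) hb
  rw [cfun_split z a b h1a (by omega)]
  omega

-- up-set lemmas
lemma upset_filter_subset {T S : Finset ℕ} (hS : S ⊆ T)
    (hup : ∀ s ∈ S, ∀ t ∈ T, s ≤ t → t ∈ S) {i : ℕ} (hi : i ∈ S) :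
    T.filter (fun t => i ≤ t) ⊆ S := by
  intro t ht
  simp only [Finset.mem_filter] at ht
  exact hup i hi t ht.1 ht.2

lemma upset_mem_iff {T S : Finset ℕ} (hS : S ⊆ T)
    (hup : ∀ s ∈ S, ∀ t ∈ T, s ≤ t → t ∈ S) {i : ℕ} (hi : i ∈ T) :
    i ∈ S ↔ (T.filter (fun t => i ≤ t)).card ≤ S.card := by
  classical
  constructor
  · intro h
    exact Finset.card_le_card (upset_filter_subset hS hup h)
  · intro h
    by_contra hc
    have hsub : S ⊆ (T.filter (fun t => i ≤ t)).erase i := by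
      intro s hs
      rcases Nat.lt_or_ge i s with h' | h'
      · simp only [Finset.mem_erase, Finset.mem_filter]
        exact ⟨by omega, hS hs, by omega⟩
      · exact absurd (hup s hs i hi h') hc
    have h1 := Finset.card_le_card hsub
    have h2 : i ∈ T.filter (fun t => i ≤ t) := by
      simp only [Finset.mem_filter]; exact ⟨hi, le_refl _⟩
    have h3 := Finset.card_erase_of_mem h2
    have h4 : 0 < (T.filter (fun t => i ≤ t)).card := Finset.card_pos.mpr ⟨i, h2⟩
    omega

lemma decomp_card {n : ℕ} {z : Finset ℕ} (hz : z ⊆ Finset.Icc 1 n) :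
    z.card = ((Finset.Icc 1 n).filter (fun i => sgv n z i = 1)).card +
      (((Finset.Icc 1 n).filter (fun i => sgv n z i = 2)).filter (fun i => i ∈ z)).card := by
  classical
  have h1 : (Finset.Icc 1 n).filter (fun i => sgv n z i = 1) = z.filter (fun i => sgv n z i = 1) := by
    ext i
    simp only [Finset.mem_filter]
    constructor
    · rintro ⟨h, h'⟩; exact ⟨mem_of_sgv_one h', h'⟩
    · rintro ⟨h, h'⟩; exact ⟨hz h, h'⟩
  have h2 : ((Finset.Icc 1 n).filter (fun i => sgv n z i = 2)).filter (fun i => i ∈ z)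
      = z.filter (fun i => sgv n z i = 2) := by
    ext i
    simp only [Finset.mem_filter]
    constructor
    · rintro ⟨⟨h, h'⟩, h''⟩; exact ⟨h'', h'⟩
    · rintro ⟨h, h'⟩; exact ⟨⟨hz h, h'⟩, h⟩
  rw [h1, h2]
  rw [← Finset.card_union_of_disjoint (by
    rw [Finset.disjoint_left]
    intro i hi hi'
    simp only [Finset.mem_filter] at hi hi'
    omega)]
  congr 1
  ext i
  simp only [Finset.mem_union, Finset.mem_filter]
  constructor
  · intro h; rcases sgv_cases_mem (n := n) h with h' | h' <;> [left; right] <;> exact ⟨h, h'⟩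
  · rintro (⟨h, _⟩ | ⟨h, _⟩) <;> exact h

lemma stars_eq_of_sgv_eq {n : ℕ} {z w : Finset ℕ}
    (hsg : ∀ i ∈ Finset.Icc 1 n, sgv n w i = sgv n z i) (v : ℕ) :
    (Finset.Icc 1 n).filter (fun i => sgv n w i = v) =
      (Finset.Icc 1 n).filter (fun i => sgv n z i = v) := by
  apply Finset.filter_congr
  intro i hi
  simp [hsg i hi]

lemma subset_of_sgv_eq {n : ℕ} {z w : Finset ℕ} (hz : z ⊆ Finset.Icc 1 n)
    (hw : w ⊆ Finset.Icc 1 n)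
    (hsg : ∀ i ∈ Finset.Icc 1 n, sgv n w i = sgv n z i) (hcard : w.card ≤ z.card) :
    w ⊆ z := by
  classical
  intro i hi
  have hiI := hw hi
  rcases sgv_cases_mem (n := n) hi with h1 | h1
  · exact mem_of_sgv_one (by rw [← hsg i hiI]; exact h1)
  · by_contra hc
    have hdz := decomp_card hz
    have hdw := decomp_card hw
    rw [stars_eq_of_sgv_eq hsg 1, stars_eq_of_sgv_eq hsg 2] at hdw
    have hcardS : (((Finset.Icc 1 n).filter (fun i => sgv n z i = 2)).filter (fun i => i ∈ w)).card
        ≤ (((Finset.Icc 1 n).filter (fun i => sgv n z i = 2)).filter (fun i => i ∈ z)).card := by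
      omega
    have hiT : i ∈ (Finset.Icc 1 n).filter (fun i => sgv n z i = 2) := by
      simp only [Finset.mem_filter]
      exact ⟨hiI, by rw [← hsg i hiI]; exact h1⟩
    have hsub : ((Finset.Icc 1 n).filter (fun i => sgv n z i = 2)).filter (fun i => i ∈ z)
        ⊆ (((Finset.Icc 1 n).filter (fun i => sgv n z i = 2)).filter (fun i => i ∈ w)).erase i := by
      intro t ht
      simp only [Finset.mem_filter] at ht
      obtain ⟨⟨htI, hts⟩, htz⟩ := ht
      have hszi : sgv n z i = 2 := by rw [← hsg i hiI]; exact h1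
      have hit : i < t := star_order htI hiI htz hts hc hszi
      have htw : t ∈ w := by
        by_contra hcw
        have hswt : sgv n w t = 2 := by rw [hsg t htI]; exact hts
        have := star_order hiI htI hi h1 hcw hswt
        omega
      simp only [Finset.mem_erase, Finset.mem_filter]
      exact ⟨by omega, ⟨htI, hts⟩, htw⟩
    have hc1 := Finset.card_le_card hsub
    have hiSw : i ∈ ((Finset.Icc 1 n).filter (fun i => sgv n z i = 2)).filter (fun i => i ∈ w) := by
      simp only [Finset.mem_filter] at hiT ⊢; exact ⟨hiT, hi⟩
    have hc2 := Finset.card_erase_of_mem hiSw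
    have hc3 : 0 < (((Finset.Icc 1 n).filter (fun i => sgv n z i = 2)).filter (fun i => i ∈ w)).card :=
      Finset.card_pos.mpr ⟨i, hiSw⟩
    omega

lemma cfun_erase (z : Finset ℕ) {b : ℕ} (hb : b ∈ z) (h1 : 1 ≤ b) (m : ℕ) :
    cfun (z.erase b) 1 m = cfun z 1 m - (if b ≤ m then 2 else 0) := by
  classical
  rw [cfun_eq_sum, cfun_eq_sum]
  have hpt : ∀ m' ∈ Finset.Icc 1 m, (if m' ∈ z.erase b then (1:ℤ) else -1) =
      (if m' ∈ z then (1:ℤ) else -1) + (if m' = b then -2 else 0) := by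
    intro m' _
    by_cases h : m' = b
    · subst h
      simp [hb, Finset.mem_erase]
    · simp [Finset.mem_erase, h]
  rw [Finset.sum_congr rfl hpt, Finset.sum_add_distrib]
  rw [Finset.sum_ite_eq' (Finset.Icc 1 m) b (fun _ => (-2:ℤ))]
  by_cases h : b ≤ m
  · rw [if_pos (by simp [Finset.mem_Icc]; omega), if_pos h]; ring
  · rw [if_neg (by simp [Finset.mem_Icc]; omega), if_neg h]; ring

lemma sgv_erase_two {n : ℕ} {x : Finset ℕ} (hx : x ⊆ Finset.Icc 1 n) {a b : ℕ}
    (hax : a ∈ x) (hbx : b ∈ x) (hab : a < b)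
    (hsa : sgv n x a = 2) (hsb : sgv n x b = 2)
    (hmax : ∀ m ∈ x, sgv n x m = 2 → m < b → m ≤ a) :
    ∀ j ∈ Finset.Icc 1 n, sgv n (x.erase b) j =
      if j = a then 1 else if j = b then 0 else sgv n x j := by
  classical
  have hbI := hx hbx
  have haI := hx hax
  simp only [Finset.mem_Icc] at hbI haI
  have h1b : 1 ≤ b := hbI.1
  have hbn : b ≤ n := hbI.2
  have h1a : 1 ≤ a := haI.1
  have hbs := (sgv_two_iff_mem hbx).mp hsb
  have has := (sgv_two_iff_mem hax).mp hsa
  have gb := starone_bound h1b hbx hbs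
  have ga := starone_bound h1a hax has
  have hcy := cfun_erase x hbx h1b
  have hystep := cfun_step (x.erase b)
  have hgb : cfun x 1 b = cfun x 1 (b-1) + 1 := cfun_mem_step h1b hbx
  have hAB : cfun x a b = 2 := by
    refine lemB hax h1a hab hbx hbn has hbs ?_
    intro m hm1 hm2 hmx hms
    have := hmax m hmx hms hm2
    omega
  have hab2 : cfun x 1 b = cfun x 1 (a-1) + 2 := by
    rw [cfun_split x a b h1a (by omega)] at hAB
    omega
  -- the key zero interval in y
  have hyab : cfun (x.erase b) a b = 0 := by
    rw [cfun_split _ a b h1a (by omega), hcy, hcy]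
    rw [if_pos (le_refl b), if_neg (by omega)]
    omega
  intro j hj
  simp only [Finset.mem_Icc] at hj
  by_cases hja : j = a
  · subst hja
    rw [if_pos rfl]
    have hjy : j ∈ x.erase b := Finset.mem_erase.mpr ⟨by omega, hax⟩
    exact (sgv_one_iff hjy).mpr ⟨b, by simp [Finset.mem_Ioc]; omega, hyab⟩
  · rw [if_neg hja]
    by_cases hjb : j = b
    · subst hjb
      rw [if_pos rfl]
      have hjy : j ∉ x.erase j := by simp [Finset.mem_erase]
      exact (sgv_zero_iff hjy).mpr ⟨a, by simp [Finset.mem_Ico]; omega, hyab⟩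
    · rw [if_neg hjb]
      by_cases hjx : j ∈ x
      · have hjy : j ∈ x.erase b := Finset.mem_erase.mpr ⟨hjb, hjx⟩
        rcases sgv_cases_mem (n := n) hjx with hv | hv
        · rw [hv]
          obtain ⟨j', hj'r, hj'v⟩ := (sgv_one_iff hjx).mp hv
          simp only [Finset.mem_Ioc] at hj'r
          rw [cfun_split x j j' (by omega) (by omega)] at hj'v
          refine (sgv_one_iff hjy).mpr ?_
          rcases Nat.lt_or_ge b j with hbj | hbj
          · -- b < j : same witness
            refine ⟨j', by simp [Finset.mem_Ioc]; omega, ?_⟩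
            rw [cfun_split _ j j' (by omega) (by omega), hcy, hcy,
              if_pos (by omega), if_pos (by omega)]
            omega
          · have hjb' : j < b := by omega
            rcases Nat.lt_or_ge j' b with hj'b | hj'b
            · refine ⟨j', by simp [Finset.mem_Ioc]; omega, ?_⟩
              rw [cfun_split _ j j' (by omega) (by omega), hcy, hcy,
                if_neg (by omega), if_neg (by omega)]
              omega
            · -- j < b ≤ j' : IVT
              have hyj : cfun (x.erase b) 1 j = cfun x 1 (j-1) + 1 := by
                have := cfun_mem_step (z := x) (by omega : (1:ℕ) ≤ j) hjx
                rw [hcy, if_neg (by omega)]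
                omega
              have hyj' : cfun (x.erase b) 1 j' = cfun x 1 (j-1) - 2 := by
                rw [hcy, if_pos (by omega)]
                omega
              obtain ⟨m, hm1, hm2, hm3⟩ := ivt' (cfun (x.erase b) 1) hystep j j'
                (by omega) (cfun x 1 (j-1)) (by omega) (by omega)
              have hmj : m ≠ j := by
                intro h; rw [h] at hm3; omega
              refine ⟨m, by simp [Finset.mem_Ioc]; omega, ?_⟩
              rw [cfun_split _ j m (by omega) (by omega)]
              have hl := hcy (j-1)
              rw [if_neg (by omega)] at hl
              omega
        · rw [hv]
          -- j is a star-one of x, j ∉ {a,b} : j < a or b < j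
          have hjs := (sgv_two_iff_mem hjx).mp hv
          have gj := starone_bound (by omega : (1:ℕ) ≤ j) hjx hjs
          refine (sgv_two_iff_mem hjy).mpr ?_
          intro j' hj'r
          simp only [Finset.mem_Ioc] at hj'r
          rw [cfun_split _ j j' (by omega) (by omega), hcy, hcy]
          have g1 := gj j' (by omega) (by omega)
          rcases Nat.lt_or_ge b j with hbj | hbj
          · split_ifs <;> omega
          · have hja' : j < a := by
              have := hmax j hjx hv (by omega)
              omega
            rcases Nat.lt_or_ge j' b with hj'b | hj'b
            · split_ifs <;> omega
            · have e1 := gb j' (by omega) (by omega)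
              have e2 := gj (a-1) (by omega) (by omega)
              split_ifs <;> omega
      · have hjy : j ∉ x.erase b := by simp [Finset.mem_erase, hjx]
        rcases sgv_cases_notMem (n := n) hjx with hv | hv
        · rw [hv]
          obtain ⟨l, hlr, hlv⟩ := (sgv_zero_iff hjx).mp hv
          simp only [Finset.mem_Ico] at hlr
          rw [cfun_split x l j (by omega) (by omega)] at hlv
          refine (sgv_zero_iff hjy).mpr ?_
          rcases Nat.lt_or_ge j b with hjb' | hjb'
          · refine ⟨l, by simp [Finset.mem_Ico]; omega, ?_⟩
            rw [cfun_split _ l j (by omega) (by omega), hcy, hcy,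
              if_neg (by omega), if_neg (by omega)]
            omega
          · have hbj : b < j := by omega
            rcases Nat.lt_or_ge b l with hbl | hbl
            · refine ⟨l, by simp [Finset.mem_Ico]; omega, ?_⟩
              rw [cfun_split _ l j (by omega) (by omega), hcy, hcy,
                if_pos (by omega), if_pos (by omega)]
              omega
            · -- l ≤ b, in fact l < b
              have hlb : l < b := by
                rcases Nat.lt_or_ge l b with h | h
                · exact h
                · exfalso
                  have : l = b := by omega
                  subst this
                  have := gb j (by omega) (by omega)
                  omega
              have hyl : cfun (x.erase b) 1 (l-1) = cfun x 1 j := by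
                rw [hcy, if_neg (by omega)]
                omega
              have hya : cfun (x.erase b) 1 (a-1) ≤ cfun x 1 j - 2 := by
                rw [hcy, if_neg (by omega)]
                have := gb j (by omega) (by omega)
                omega
              have hcj : cfun (x.erase b) 1 j = cfun x 1 j - 2 := by
                rw [hcy, if_pos (by omega)]
              rcases Nat.lt_or_ge (a-1) (l-1) with hord | hord
              · obtain ⟨m, hm1, hm2, hm3⟩ := ivt (cfun (x.erase b) 1) hystep (a-1) (l-1)
                  (by omega) (cfun x 1 j - 2) (by omega) (by omega)
                refine ⟨m+1, by simp [Finset.mem_Ico]; omega, ?_⟩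
                rw [cfun_split _ (m+1) j (by omega) (by omega)]
                simp only [Nat.add_sub_cancel]
                omega
              · obtain ⟨m, hm1, hm2, hm3⟩ := ivt' (cfun (x.erase b) 1) hystep (l-1) (a-1)
                  (by omega) (cfun x 1 j - 2) (by omega) (by omega)
                refine ⟨m+1, by simp [Finset.mem_Ico]; omega, ?_⟩
                rw [cfun_split _ (m+1) j (by omega) (by omega)]
                simp only [Nat.add_sub_cancel]
                omega
        · rw [hv]
          -- star-zero: j < a
          have hja' : j < a := star_order (by simp [Finset.mem_Icc]; omega)
            (by simp [Finset.mem_Icc]; omega) hax hsa hjx hv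
          have hjs := (sgv_two_iff_notMem hjx).mp hv
          refine (sgv_two_iff_notMem hjy).mpr ?_
          intro l hlr
          simp only [Finset.mem_Ico] at hlr
          have := hjs l (by simp [Finset.mem_Ico]; omega)
          rw [cfun_split x l j (by omega) (by omega)] at this
          rw [cfun_split _ l j (by omega) (by omega), hcy, hcy,
            if_neg (by omega), if_neg (by omega)]
          omega

lemma sgv_erase_one {n : ℕ} {x : Finset ℕ} (hx : x ⊆ Finset.Icc 1 n) {b : ℕ}
    (hbx : b ∈ x) (hsb : sgv n x b = 2)
    (hmin : ∀ m ∈ x, sgv n x m = 2 → b ≤ m) :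
    ∀ j ∈ Finset.Icc 1 n, sgv n (x.erase b) j = sgv n x j := by
  classical
  have hbI := hx hbx
  simp only [Finset.mem_Icc] at hbI
  have h1b : 1 ≤ b := hbI.1
  have hbn : b ≤ n := hbI.2
  have hbs := (sgv_two_iff_mem hbx).mp hsb
  have gb := starone_bound h1b hbx hbs
  have hcy := cfun_erase x hbx h1b
  have hystep := cfun_step (x.erase b)
  have hgb : cfun x 1 b = cfun x 1 (b-1) + 1 := cfun_mem_step h1b hbx
  intro j hj
  simp only [Finset.mem_Icc] at hj
  by_cases hjb : j = b
  · subst hjb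
    rw [hsb]
    have hjy : j ∉ x.erase j := by simp [Finset.mem_erase]
    refine (sgv_two_iff_notMem hjy).mpr ?_
    intro l hlr
    simp only [Finset.mem_Ico] at hlr
    rw [cfun_split _ l j (by omega) (by omega)]
    have e1 := hcy j
    have e2 := hcy (l-1)
    rw [if_pos (le_refl _)] at e1
    rw [if_neg (by omega)] at e2
    intro hzero
    have hc2 : cfun x l j = 2 := by
      rw [cfun_split x l j (by omega) (by omega)]
      omega
    obtain ⟨m, hm1, hm2, hm3, hm4⟩ := lemA hbx h1b hbn hbs (by omega) (by omega) hc2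
    have := hmin m hm3 hm4
    omega
  · by_cases hjx : j ∈ x
    · have hjy : j ∈ x.erase b := Finset.mem_erase.mpr ⟨hjb, hjx⟩
      rcases sgv_cases_mem (n := n) hjx with hv | hv
      · rw [hv]
        obtain ⟨j', hj'r, hj'v⟩ := (sgv_one_iff hjx).mp hv
        simp only [Finset.mem_Ioc] at hj'r
        rw [cfun_split x j j' (by omega) (by omega)] at hj'v
        refine (sgv_one_iff hjy).mpr ?_
        rcases Nat.lt_or_ge b j with hbj | hbj
        · refine ⟨j', by simp [Finset.mem_Ioc]; omega, ?_⟩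
          rw [cfun_split _ j j' (by omega) (by omega), hcy, hcy,
            if_pos (by omega), if_pos (by omega)]
          omega
        · have hjb' : j < b := by omega
          rcases Nat.lt_or_ge j' b with hj'b | hj'b
          · refine ⟨j', by simp [Finset.mem_Ioc]; omega, ?_⟩
            rw [cfun_split _ j j' (by omega) (by omega), hcy, hcy,
              if_neg (by omega), if_neg (by omega)]
            omega
          · have hyj : cfun (x.erase b) 1 j = cfun x 1 (j-1) + 1 := by
              have := cfun_mem_step (z := x) (by omega : (1:ℕ) ≤ j) hjx
              rw [hcy, if_neg (by omega)]
              omega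
            have hyj' : cfun (x.erase b) 1 j' = cfun x 1 (j-1) - 2 := by
              rw [hcy, if_pos (by omega)]
              omega
            obtain ⟨m, hm1, hm2, hm3⟩ := ivt' (cfun (x.erase b) 1) hystep j j'
              (by omega) (cfun x 1 (j-1)) (by omega) (by omega)
            have hmj : m ≠ j := by
              intro h; rw [h] at hm3; omega
            refine ⟨m, by simp [Finset.mem_Ioc]; omega, ?_⟩
            rw [cfun_split _ j m (by omega) (by omega)]
            have hl := hcy (j-1)
            rw [if_neg (by omega)] at hl
            omega
      · rw [hv]
        have hbj : b < j := by
          have := hmin j hjx hv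
          omega
        have hjs := (sgv_two_iff_mem hjx).mp hv
        have gj := starone_bound (by omega : (1:ℕ) ≤ j) hjx hjs
        refine (sgv_two_iff_mem hjy).mpr ?_
        intro j' hj'r
        simp only [Finset.mem_Ioc] at hj'r
        rw [cfun_split _ j j' (by omega) (by omega), hcy, hcy]
        have g1 := gj j' (by omega) (by omega)
        split_ifs <;> omega
    · have hjy : j ∉ x.erase b := by simp [Finset.mem_erase, hjx]
      rcases sgv_cases_notMem (n := n) hjx with hv | hv
      · rw [hv]
        obtain ⟨l, hlr, hlv⟩ := (sgv_zero_iff hjx).mp hv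
        simp only [Finset.mem_Ico] at hlr
        rw [cfun_split x l j (by omega) (by omega)] at hlv
        refine (sgv_zero_iff hjy).mpr ?_
        rcases Nat.lt_or_ge j b with hjb' | hjb'
        · refine ⟨l, by simp [Finset.mem_Ico]; omega, ?_⟩
          rw [cfun_split _ l j (by omega) (by omega), hcy, hcy,
            if_neg (by omega), if_neg (by omega)]
          omega
        · have hbj : b < j := by omega
          rcases Nat.lt_or_ge b l with hbl | hbl
          · refine ⟨l, by simp [Finset.mem_Ico]; omega, ?_⟩
            rw [cfun_split _ l j (by omega) (by omega), hcy, hcy,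
              if_pos (by omega), if_pos (by omega)]
            omega
          · have hlb : l < b := by
              rcases Nat.lt_or_ge l b with h | h
              · exact h
              · exfalso
                have : l = b := by omega
                subst this
                have := gb j (by omega) (by omega)
                omega
            have hgbj := gb j (by omega) (by omega)
            have hbj1 : b + 1 ≠ j := by
              intro h
              subst h
              have := cfun_notMem_step (z := x) (by omega : (1:ℕ) ≤ b+1) hjx
              simp only [Nat.add_sub_cancel] at this
              omega
            have hyl : cfun (x.erase b) 1 (l-1) = cfun x 1 j := by
              rw [hcy, if_neg (by omega)]
              omega
            have hyb : cfun (x.erase b) 1 b ≤ cfun x 1 j - 2 := by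
              rw [hcy, if_pos (le_refl _)]
              omega
            obtain ⟨m, hm1, hm2, hm3⟩ := ivt' (cfun (x.erase b) 1) hystep (l-1) b
              (by omega) (cfun x 1 j - 2) (by omega) (by omega)
            have hcj : cfun (x.erase b) 1 j = cfun x 1 j - 2 := by
              rw [hcy, if_pos (by omega)]
            have hmlt : m + 1 < j := by
              rcases Nat.lt_or_ge m b with h | h
              · omega
              · have : m = b := by omega
                omega
            refine ⟨m+1, by simp [Finset.mem_Ico]; omega, ?_⟩
            rw [cfun_split _ (m+1) j (by omega) (by omega)]
            simp only [Nat.add_sub_cancel]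
            omega
      · rw [hv]
        have hjb2 : j < b := star_order (by simp [Finset.mem_Icc]; omega)
          (by simp [Finset.mem_Icc]; omega) hbx hsb hjx hv
        have hjs := (sgv_two_iff_notMem hjx).mp hv
        refine (sgv_two_iff_notMem hjy).mpr ?_
        intro l hlr
        simp only [Finset.mem_Ico] at hlr
        have := hjs l (by simp [Finset.mem_Ico]; omega)
        rw [cfun_split x l j (by omega) (by omega)] at this
        rw [cfun_split _ l j (by omega) (by omega), hcy, hcy,
          if_neg (by omega), if_neg (by omega)]
        omega

open Classical in
/-- let `k ≥ n/2 + 1`, `x ∈ [n]^(k)` and let `p` map each set `z` with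
`|z| ≥ n/2` to the unique member of its signature class with `|z| + |p z| = n`.
For `b ∈ x` and `y = x \ {b}`: `p(x) ⊆ p(y) ⊆ y ⊆ x` iff `b` is one of the
`2k - n` smallest elements of `x ∩ *(x)`. In particular, `x` covers exactly
`2k - n` elements of `[n]^(k-1)` in the order `y < x ↔ p(x) ⊆ p(y) ⊆ y ⊆ x`. -/
theorem stmt_13 (n k : ℕ) (x : Finset ℕ) (hx : x ⊆ Finset.Icc 1 n)
    (hk : x.card = k) (hk2 : n + 2 ≤ 2 * k)
    (p : Finset ℕ → Finset ℕ)
    (hp : ∀ z ⊆ Finset.Icc 1 n, n ≤ 2 * z.card →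
      p z ⊆ Finset.Icc 1 n ∧ z.card + (p z).card = n ∧
        ∀ i ∈ Finset.Icc 1 n, sgv n (p z) i = sgv n z i) :
    (∀ b ∈ x,
      ((p x ⊆ p (x.erase b) ∧ p (x.erase b) ⊆ x.erase b) ↔
        (sgv n x b = 2 ∧
          ((x.filter (fun i => sgv n x i = 2)).filter (fun i => i ≤ b)).card ≤
            2 * k - n))) ∧
    (x.filter (fun b => p x ⊆ p (x.erase b) ∧ p (x.erase b) ⊆ x.erase b)).card + n =
      2 * k := by
  classical
  obtain ⟨hpx1, hpx2, hpx3⟩ := hp x hx (by omega)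
  have hpxx : p x ⊆ x := subset_of_sgv_eq hx hpx1 hpx3 (by omega)
  have hdx := decomp_card hx
  have hdpx := decomp_card hpx1
  rw [stars_eq_of_sgv_eq hpx3 1, stars_eq_of_sgv_eq hpx3 2] at hdpx
  -- notation
  have hSpSx : ((Finset.Icc 1 n).filter (fun i => sgv n x i = 2)).filter (fun i => i ∈ p x)
      ⊆ ((Finset.Icc 1 n).filter (fun i => sgv n x i = 2)).filter (fun i => i ∈ x) := by
    intro t ht
    simp only [Finset.mem_filter] at ht ⊢
    exact ⟨ht.1, hpxx ht.2⟩
  have hupgen : ∀ (z : Finset ℕ), z ⊆ Finset.Icc 1 n →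
      (∀ i ∈ Finset.Icc 1 n, sgv n z i = sgv n x i) →
      ∀ s ∈ ((Finset.Icc 1 n).filter (fun i => sgv n x i = 2)).filter (fun i => i ∈ z),
        ∀ t ∈ (Finset.Icc 1 n).filter (fun i => sgv n x i = 2), s ≤ t →
        t ∈ ((Finset.Icc 1 n).filter (fun i => sgv n x i = 2)).filter (fun i => i ∈ z) := by
    intro z hz heq s hs t ht hst
    simp only [Finset.mem_filter] at hs ht ⊢
    refine ⟨ht, ?_⟩
    by_contra hc
    have h1 : sgv n z s = 2 := by rw [heq s hs.1.1]; exact hs.1.2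
    have h2 : sgv n z t = 2 := by rw [heq t ht.1]; exact ht.2
    have := star_order hs.1.1 ht.1 hs.2 h1 hc h2
    omega
  have hxSx : x.filter (fun i => sgv n x i = 2)
      = ((Finset.Icc 1 n).filter (fun i => sgv n x i = 2)).filter (fun i => i ∈ x) := by
    ext t
    simp only [Finset.mem_filter]
    constructor
    · rintro ⟨h1, h2⟩; exact ⟨⟨hx h1, h2⟩, h1⟩
    · rintro ⟨⟨h1, h2⟩, h3⟩; exact ⟨h3, h2⟩
  have hupSp := hupgen (p x) hpx1 hpx3
  have hmem_iff : ∀ b ∈ x, sgv n x b = 2 →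
      (b ∈ p x ↔ 2 * k - n + 1 ≤
        ((x.filter (fun i => sgv n x i = 2)).filter (fun i => i ≤ b)).card) := by
    intro b hbx hv
    have hbT : b ∈ (Finset.Icc 1 n).filter (fun i => sgv n x i = 2) := by
      simp only [Finset.mem_filter]; exact ⟨hx hbx, hv⟩
    have hiff := upset_mem_iff (Finset.filter_subset _ _) hupSp hbT
    have hbmem : b ∈ ((Finset.Icc 1 n).filter (fun i => sgv n x i = 2)).filter
        (fun i => i ∈ p x) ↔ b ∈ p x := by
      simp only [Finset.mem_filter]; tauto
    have hTf : ((Finset.Icc 1 n).filter (fun i => sgv n x i = 2)).filter (fun t => b ≤ t)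
        = (x.filter (fun i => sgv n x i = 2)).filter (fun t => b ≤ t) := by
      rw [hxSx]
      ext t
      simp only [Finset.mem_filter]
      constructor
      · rintro ⟨⟨h1, h2⟩, h3⟩
        refine ⟨⟨⟨h1, h2⟩, ?_⟩, h3⟩
        by_contra hc
        have := star_order (hx hbx) h1 hbx hv hc h2
        omega
      · tauto
    have hsplit : ((x.filter (fun i => sgv n x i = 2)).filter (fun i => i ≤ b)).card
        + ((x.filter (fun i => sgv n x i = 2)).filter (fun t => b ≤ t)).card
        = (x.filter (fun i => sgv n x i = 2)).card + 1 := by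
      have hu : (x.filter (fun i => sgv n x i = 2)).filter (fun i => i ≤ b)
          ∪ (x.filter (fun i => sgv n x i = 2)).filter (fun t => b ≤ t)
          = x.filter (fun i => sgv n x i = 2) := by
        ext t; simp only [Finset.mem_union, Finset.mem_filter]
        constructor
        · rintro (⟨h, _⟩ | ⟨h, _⟩) <;> exact h
        · intro h; rcases Nat.le_total t b with h' | h' <;> [left; right] <;> exact ⟨h, h'⟩
      have hi : (x.filter (fun i => sgv n x i = 2)).filter (fun i => i ≤ b)
          ∩ (x.filter (fun i => sgv n x i = 2)).filter (fun t => b ≤ t) = {b} := by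
        ext t; simp only [Finset.mem_inter, Finset.mem_filter, Finset.mem_singleton]
        constructor
        · rintro ⟨⟨_, h1⟩, ⟨_, h2⟩⟩; omega
        · rintro rfl; exact ⟨⟨⟨hbx, hv⟩, le_refl _⟩, ⟨⟨hbx, hv⟩, le_refl _⟩⟩
      have hcui := Finset.card_union_add_card_inter
        ((x.filter (fun i => sgv n x i = 2)).filter (fun i => i ≤ b))
        ((x.filter (fun i => sgv n x i = 2)).filter (fun t => b ≤ t))
      rw [hu, hi] at hcui
      simp only [Finset.card_singleton] at hcui
      omega
    rw [hbmem, hTf] at hiff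
    rw [← hxSx] at hdx
    rw [hiff]
    omega
  have main : ∀ b ∈ x, ((p x ⊆ p (x.erase b) ∧ p (x.erase b) ⊆ x.erase b) ↔
      (sgv n x b = 2 ∧ b ∉ p x)) := by
    intro b hbx
    have hy : x.erase b ⊆ Finset.Icc 1 n := (Finset.erase_subset _ _).trans hx
    have hyc : (x.erase b).card = k - 1 := by rw [Finset.card_erase_of_mem hbx, hk]
    obtain ⟨hpy1, hpy2, hpy3⟩ := hp (x.erase b) hy (by omega)
    have hpyy : p (x.erase b) ⊆ x.erase b := subset_of_sgv_eq hy hpy1 hpy3 (by omega)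
    constructor
    · rintro ⟨h1, h2⟩
      have hbnpx : b ∉ p x := fun hc => (Finset.notMem_erase b x) (h2 (h1 hc))
      rcases sgv_cases_mem (n := n) hbx with hv | hv
      · exfalso
        have h3 : sgv n (p x) b = 1 := by rw [hpx3 b (hx hbx)]; exact hv
        exact hbnpx (mem_of_sgv_one h3)
      · exact ⟨hv, hbnpx⟩
    · rintro ⟨hv, hbnpx⟩
      refine ⟨?_, hpyy⟩
      by_cases hA : (∃ m ∈ x, sgv n x m = 2 ∧ m < b)
      · -- there is a star-one below b
        have hAne : ((x.filter (fun i => sgv n x i = 2)).filter (fun i => i < b)).Nonempty := by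
          obtain ⟨m, h1, h2, h3⟩ := hA
          exact ⟨m, by simp only [Finset.mem_filter]; exact ⟨⟨h1, h2⟩, h3⟩⟩
        obtain ⟨a, haA, hamax'⟩ : ∃ a ∈ (x.filter (fun i => sgv n x i = 2)).filter
              (fun i => i < b),
            ∀ m ∈ (x.filter (fun i => sgv n x i = 2)).filter (fun i => i < b), m ≤ a :=
          ⟨_, Finset.max'_mem _ hAne, fun m hm => Finset.le_max' _ m hm⟩
        simp only [Finset.mem_filter] at haA
        obtain ⟨⟨hax, hsa⟩, hab⟩ := haA
        have hmax : ∀ m ∈ x, sgv n x m = 2 → m < b → m ≤ a := by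
          intro m h1 h2 h3
          exact hamax' m (by simp only [Finset.mem_filter]; exact ⟨⟨h1, h2⟩, h3⟩)
        have hsig := sgv_erase_two hx hax hbx hab hsa hv hmax
        have hanpx : a ∉ p x := by
          intro hc
          have hbSp := hupSp a (by simp only [Finset.mem_filter]; exact ⟨⟨hx hax, hsa⟩, hc⟩)
            b (by simp only [Finset.mem_filter]; exact ⟨hx hbx, hv⟩) (le_of_lt hab)
          simp only [Finset.mem_filter] at hbSp
          exact hbnpx hbSp.2
        -- signature sets of y
        have hOy : (Finset.Icc 1 n).filter (fun i => sgv n (x.erase b) i = 1)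
            = insert a ((Finset.Icc 1 n).filter (fun i => sgv n x i = 1)) := by
          ext t
          simp only [Finset.mem_insert, Finset.mem_filter]
          constructor
          · rintro ⟨htI, hts⟩
            rw [hsig t htI] at hts
            by_cases h1 : t = a
            · left; exact h1
            · rw [if_neg h1] at hts
              by_cases h2 : t = b
              · rw [if_pos h2] at hts; omega
              · rw [if_neg h2] at hts; right; exact ⟨htI, hts⟩
          · intro h
            rcases h with h1 | ⟨htI, hts⟩
            · rw [h1]
              exact ⟨hx hax, by rw [hsig a (hx hax), if_pos rfl]⟩
            · refine ⟨htI, ?_⟩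
              rw [hsig t htI, if_neg (by rintro rfl; omega), if_neg (by rintro rfl; omega)]
              exact hts
        have hOycard : ((Finset.Icc 1 n).filter (fun i => sgv n (x.erase b) i = 1)).card
            = ((Finset.Icc 1 n).filter (fun i => sgv n x i = 1)).card + 1 := by
          rw [hOy, Finset.card_insert_of_notMem (by
            simp only [Finset.mem_filter]
            rintro ⟨_, h⟩
            omega)]
        have hTy : ∀ t ∈ (Finset.Icc 1 n).filter (fun i => sgv n (x.erase b) i = 2),
            t ∈ (Finset.Icc 1 n).filter (fun i => sgv n x i = 2) ∧ t ≠ a ∧ t ≠ b := by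
          intro t ht
          simp only [Finset.mem_filter] at ht ⊢
          obtain ⟨htI, hts⟩ := ht
          rw [hsig t htI] at hts
          by_cases h1 : t = a
          · rw [if_pos h1] at hts; omega
          · rw [if_neg h1] at hts
            by_cases h2 : t = b
            · rw [if_pos h2] at hts; omega
            · rw [if_neg h2] at hts; exact ⟨⟨htI, hts⟩, h1, h2⟩
        have hdy := decomp_card hpy1
        rw [stars_eq_of_sgv_eq hpy3 1, stars_eq_of_sgv_eq hpy3 2] at hdy
        -- now show p x ⊆ p (x.erase b)
        intro i hi
        have hiI : i ∈ Finset.Icc 1 n := hpx1 hi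
        have hsgi : sgv n (p x) i = sgv n x i := hpx3 i hiI
        rcases sgv_cases_mem (n := n) hi with hvi | hvi
        · have hxi1 : sgv n x i = 1 := by rw [← hsgi]; exact hvi
          have hyi1 : sgv n (x.erase b) i = 1 := by
            rw [hsig i hiI, if_neg (by rintro rfl; omega), if_neg (by rintro rfl; omega)]
            exact hxi1
          exact mem_of_sgv_one (show sgv n (p (x.erase b)) i = 1 by
            rw [hpy3 i hiI]; exact hyi1)
        · have hxi2 : sgv n x i = 2 := by rw [← hsgi]; exact hvi
          have hix : i ∈ x := hpxx hi
          have hib : i ≠ b := by rintro rfl; exact hbnpx hi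
          have hia : i ≠ a := by rintro rfl; exact hanpx hi
          have hyi2 : sgv n (x.erase b) i = 2 := by
            rw [hsig i hiI, if_neg hia, if_neg hib]
            exact hxi2
          have hiTy : i ∈ (Finset.Icc 1 n).filter (fun i => sgv n (x.erase b) i = 2) := by
            simp only [Finset.mem_filter]; exact ⟨hiI, hyi2⟩
          have hupSy : ∀ s ∈ ((Finset.Icc 1 n).filter (fun i => sgv n (x.erase b) i = 2)).filter
                (fun i => i ∈ p (x.erase b)),
              ∀ t ∈ (Finset.Icc 1 n).filter (fun i => sgv n (x.erase b) i = 2), s ≤ t →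
              t ∈ ((Finset.Icc 1 n).filter (fun i => sgv n (x.erase b) i = 2)).filter
                (fun i => i ∈ p (x.erase b)) := by
            intro s hs t ht hst
            simp only [Finset.mem_filter] at hs ht ⊢
            refine ⟨ht, ?_⟩
            by_contra hc
            have h1 : sgv n (p (x.erase b)) s = 2 := by rw [hpy3 s hs.1.1]; exact hs.1.2
            have h2 : sgv n (p (x.erase b)) t = 2 := by rw [hpy3 t ht.1]; exact ht.2
            have := star_order hs.1.1 ht.1 hs.2 h1 hc h2
            omega
          have hSycard : (((Finset.Icc 1 n).filter (fun i => sgv n (x.erase b) i = 2)).filter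
              (fun i => i ∈ p (x.erase b))).card
              = (((Finset.Icc 1 n).filter (fun i => sgv n x i = 2)).filter
                (fun i => i ∈ p x)).card := by
            omega
          have hchain : (((Finset.Icc 1 n).filter (fun i => sgv n (x.erase b) i = 2)).filter
              (fun t => i ≤ t)).card
              ≤ (((Finset.Icc 1 n).filter (fun i => sgv n (x.erase b) i = 2)).filter
                (fun i => i ∈ p (x.erase b))).card := by
            rw [hSycard]
            refine le_trans (Finset.card_le_card ?_) (Finset.card_le_card
              (upset_filter_subset (Finset.filter_subset _ _) hupSp
                (show i ∈ ((Finset.Icc 1 n).filter (fun i => sgv n x i = 2)).filter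
                  (fun i => i ∈ p x) by
                  simp only [Finset.mem_filter]; exact ⟨⟨hiI, hxi2⟩, hi⟩)))
            intro t ht
            simp only [Finset.mem_filter] at ht ⊢
            have h3 := (hTy t (by simp only [Finset.mem_filter]; exact ht.1)).1
            simp only [Finset.mem_filter] at h3
            exact ⟨h3, ht.2⟩
          have := (upset_mem_iff (Finset.filter_subset _ _) hupSy hiTy).mpr hchain
          simp only [Finset.mem_filter] at this
          exact this.2
      · push_neg at hA
        have hmin : ∀ m ∈ x, sgv n x m = 2 → b ≤ m := by
          intro m h1 h2
          have := hA m h1 h2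
          omega
        have hsig := sgv_erase_one hx hbx hv hmin
        refine subset_of_sgv_eq hpy1 hpx1 (fun i hiI => ?_) (by omega)
        rw [hpx3 i hiI, hpy3 i hiI, hsig i hiI]
  constructor
  · intro b hbx
    rw [main b hbx]
    have hmi := hmem_iff b hbx
    constructor
    · rintro ⟨hv, hnp⟩
      refine ⟨hv, ?_⟩
      have h1 : ¬ (2 * k - n + 1 ≤
          ((x.filter (fun i => sgv n x i = 2)).filter (fun i => i ≤ b)).card) :=
        fun h => hnp ((hmi hv).mpr h)
      omega
    · rintro ⟨hv, hw⟩
      refine ⟨hv, fun hc => ?_⟩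
      have := (hmi hv).mp hc
      omega
  · have hGeq : x.filter (fun b => p x ⊆ p (x.erase b) ∧ p (x.erase b) ⊆ x.erase b)
        = (x.filter (fun i => sgv n x i = 2)).filter (fun i => i ∉ p x) := by
      ext t
      simp only [Finset.mem_filter]
      constructor
      · rintro ⟨htx, hcond⟩
        have h1 := (main t htx).mp hcond
        exact ⟨⟨htx, h1.1⟩, h1.2⟩
      · rintro ⟨⟨htx, hts⟩, htp⟩
        exact ⟨htx, (main t htx).mpr ⟨hts, htp⟩⟩
    rw [hGeq]
    have hsplitG := Finset.card_filter_add_card_filter_not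
      (s := x.filter (fun i => sgv n x i = 2)) (p := fun i => i ∈ p x)
    have hSp' : (x.filter (fun i => sgv n x i = 2)).filter (fun i => i ∈ p x)
        = ((Finset.Icc 1 n).filter (fun i => sgv n x i = 2)).filter (fun i => i ∈ p x) := by
      rw [hxSx]
      ext t
      simp only [Finset.mem_filter]
      constructor
      · rintro ⟨⟨h1, h2⟩, h3⟩; exact ⟨⟨h1.1, h1.2⟩, h3⟩
      · rintro ⟨⟨h1, h2⟩, h3⟩; exact ⟨⟨⟨h1, h2⟩, hpxx h3⟩, h3⟩
    rw [hSp'] at hsplitG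
    rw [← hxSx] at hdx
    omega
end

section
/- For x ⊆ [n] viewed in ℤ_n with circular pair function pr'_x: if pr'_x(i) = j exists then pr'_x(j) exists, pr'_x(j) = i, and exactly one of i, j lies in x (csg(x)_i ≠ csg(x)_j). -/
/-- The circular interval `[i,j]_n ⊆ {1,...,n}`. -/
def cIcc (n i j : ℕ) : Finset ℕ :=
  if i ≤ j then Finset.Icc i j else Finset.Icc i n ∪ Finset.Icc 1 j

/-- `c'_x(i,j) = |[i,j]_n ∩ x| - |[i,j]_n \ x|`. -/
def ccfun (n : ℕ) (x : Finset ℕ) (i j : ℕ) : ℤ :=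
  ((cIcc n i j ∩ x).card : ℤ) - ((cIcc n i j \ x).card : ℤ)

/-- `j = pr'_x(i)` for `i ∈ x`: `c'_x(i,j) = 0` and `|[i,j]_n|` is minimal. -/
def IsCPairIn (n : ℕ) (x : Finset ℕ) (i j : ℕ) : Prop :=
  j ∈ Finset.Icc 1 n ∧ ccfun n x i j = 0 ∧
    ∀ j' ∈ Finset.Icc 1 n, ccfun n x i j' = 0 → (cIcc n i j).card ≤ (cIcc n i j').card

/-- `j = pr'_x(i)` for `i ∉ x`: `c'_x(j,i) = 0` and `|[j,i]_n|` is minimal. -/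
def IsCPairOut (n : ℕ) (x : Finset ℕ) (i j : ℕ) : Prop :=
  j ∈ Finset.Icc 1 n ∧ ccfun n x j i = 0 ∧
    ∀ j' ∈ Finset.Icc 1 n, ccfun n x j' i = 0 → (cIcc n j i).card ≤ (cIcc n j' i).card

def cdist (n i j : ℕ) : ℕ := if i ≤ j then j - i else j + n - i

def cpt (n i t : ℕ) : ℕ := if i + t ≤ n then i + t else i + t - n

def cwt (x : Finset ℕ) (k : ℕ) : ℤ := if k ∈ x then 1 else -1

lemma cwt_cases (x : Finset ℕ) (k : ℕ) : cwt x k = 1 ∨ cwt x k = -1 := by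
  unfold cwt; split <;> simp

lemma cdist_lt (n i j : ℕ) (hi1 : 1 ≤ i) (hin : i ≤ n) (hj1 : 1 ≤ j) (hjn : j ≤ n) :
    cdist n i j < n := by unfold cdist; split <;> omega

lemma cdist_self (n i : ℕ) : cdist n i i = 0 := by unfold cdist; simp

lemma cpt_mem (n i t : ℕ) (hi1 : 1 ≤ i) (hin : i ≤ n) (ht : t < n) :
    1 ≤ cpt n i t ∧ cpt n i t ≤ n := by unfold cpt; split <;> omega

lemma cpt_zero (n i : ℕ) (hin : i ≤ n) : cpt n i 0 = i := by unfold cpt; split <;> omega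

lemma cpt_cdist (n i t : ℕ) (hi1 : 1 ≤ i) (hin : i ≤ n) (ht : t < n) :
    cdist n i (cpt n i t) = t := by unfold cpt cdist; split <;> split <;> omega

lemma cpt_of_cdist (n i j : ℕ) (hi1 : 1 ≤ i) (hin : i ≤ n) (hj1 : 1 ≤ j) (hjn : j ≤ n) :
    cpt n i (cdist n i j) = j := by unfold cpt cdist; split <;> split <;> omega

lemma cdist_rev (n i j : ℕ) (hi1 : 1 ≤ i) (hin : i ≤ n) (hj1 : 1 ≤ j) (hjn : j ≤ n) :
    cdist n (n+1-j) (n+1-i) = cdist n i j := by unfold cdist; split_ifs <;> omega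

lemma cdist_flip (n a b p : ℕ) (ha1 : 1 ≤ a) (han : a ≤ n) (hb1 : 1 ≤ b) (hbn : b ≤ n)
    (hp1 : 1 ≤ p) (hpn : p ≤ n) :
    cdist n a p ≤ cdist n a b ↔ cdist n p b ≤ cdist n a b := by
  unfold cdist; split_ifs <;> omega

lemma cdist_sub (n i j j' : ℕ) (hi1 : 1 ≤ i) (hin : i ≤ n) (hj1 : 1 ≤ j) (hjn : j ≤ n)
    (hj'1 : 1 ≤ j') (hj'n : j' ≤ n) (ha : cdist n i j' ≤ cdist n i j) :
    cdist n j' j = cdist n i j - cdist n i j' := by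
  unfold cdist at ha ⊢; split_ifs at ha ⊢ <;> omega

lemma cdist_lb (n i j j' : ℕ) (hi1 : 1 ≤ i) (hin : i ≤ n) (hj1 : 1 ≤ j) (hjn : j ≤ n)
    (hj'1 : 1 ≤ j') (hj'n : j' ≤ n) (ha : cdist n i j < cdist n i j') :
    cdist n i j < cdist n j' j := by
  unfold cdist at ha ⊢; split_ifs at ha ⊢ <;> omega

lemma cdist_between (n i j j' k : ℕ) (hi1 : 1 ≤ i) (hin : i ≤ n) (hj1 : 1 ≤ j) (hjn : j ≤ n)
    (hj'1 : 1 ≤ j') (hj'n : j' ≤ n) (hk1 : 1 ≤ k) (hkn : k ≤ n)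
    (ha : cdist n i j' ≤ cdist n i j) :
    (cdist n j' k ≤ cdist n j' j ↔ cdist n i j' ≤ cdist n i k ∧ cdist n i k ≤ cdist n i j) := by
  unfold cdist at ha ⊢; split_ifs at ha ⊢ <;> omega

lemma mem_cIcc_iff (n i j k : ℕ) (hi1 : 1 ≤ i) (hin : i ≤ n) (hj1 : 1 ≤ j) (hjn : j ≤ n) :
    k ∈ cIcc n i j ↔ 1 ≤ k ∧ k ≤ n ∧ cdist n i k ≤ cdist n i j := by
  unfold cIcc cdist
  split_ifs <;> simp [Finset.mem_Icc, Finset.mem_union] <;> omega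

lemma card_cIcc (n i j : ℕ) (hi1 : 1 ≤ i) (hin : i ≤ n) (hj1 : 1 ≤ j) (hjn : j ≤ n) :
    (cIcc n i j).card = cdist n i j + 1 := by
  unfold cIcc cdist
  split_ifs with h
  · rw [Nat.card_Icc]; omega
  · rw [Finset.card_union_of_disjoint, Nat.card_Icc, Nat.card_Icc] <;> try omega
    rw [Finset.disjoint_left]
    intro a ha ha'
    simp [Finset.mem_Icc] at ha ha'
    omega

lemma ccfun_eq_sum (n : ℕ) (x : Finset ℕ) (a b : ℕ) :
    ccfun n x a b = ∑ k ∈ cIcc n a b, cwt x k := by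
  have e1 : ∀ k ∈ cIcc n a b ∩ x, cwt x k = (1 : ℤ) := by
    intro k hk
    simp only [Finset.mem_inter] at hk
    simp [cwt, hk.2]
  have e2 : ∀ k ∈ cIcc n a b \ x, cwt x k = (-1 : ℤ) := by
    intro k hk
    simp only [Finset.mem_sdiff] at hk
    simp [cwt, hk.2]
  have h1 : ∑ k ∈ cIcc n a b ∩ x, cwt x k = ((cIcc n a b ∩ x).card : ℤ) := by
    rw [Finset.sum_eq_card_nsmul e1]; simp
  have h2 : ∑ k ∈ cIcc n a b \ x, cwt x k = -(((cIcc n a b \ x).card : ℤ)) := by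
    rw [Finset.sum_eq_card_nsmul e2]; simp
  unfold ccfun
  rw [← Finset.sum_inter_add_sum_sdiff (cIcc n a b) x (cwt x), h1, h2]
  ring

lemma cIcc_eq_image (n i j j' : ℕ) (hi1 : 1 ≤ i) (hin : i ≤ n) (hj1 : 1 ≤ j) (hjn : j ≤ n)
    (hj'1 : 1 ≤ j') (hj'n : j' ≤ n) (ha : cdist n i j' ≤ cdist n i j) :
    cIcc n j' j = (Finset.Ico (cdist n i j') (cdist n i j + 1)).image (cpt n i) := by
  have hDn : cdist n i j < n := cdist_lt n i j hi1 hin hj1 hjn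
  ext k
  simp only [Finset.mem_image, Finset.mem_Ico]
  constructor
  · intro hk
    rw [mem_cIcc_iff n j' j k hj'1 hj'n hj1 hjn] at hk
    obtain ⟨hk1, hkn, hkd⟩ := hk
    rw [cdist_between n i j j' k hi1 hin hj1 hjn hj'1 hj'n hk1 hkn ha] at hkd
    exact ⟨cdist n i k, ⟨hkd.1, by omega⟩, cpt_of_cdist n i k hi1 hin hk1 hkn⟩
  · rintro ⟨t, ⟨ht1, ht2⟩, rfl⟩
    have htn : t < n := by omega
    obtain ⟨hp1, hpn⟩ := cpt_mem n i t hi1 hin htn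
    rw [mem_cIcc_iff n j' j _ hj'1 hj'n hj1 hjn]
    refine ⟨hp1, hpn, ?_⟩
    rw [cdist_between n i j j' _ hi1 hin hj1 hjn hj'1 hj'n hp1 hpn ha,
        cpt_cdist n i t hi1 hin htn]
    omega

lemma ccfun_tail (n : ℕ) (x : Finset ℕ) (i j j' : ℕ) (hi1 : 1 ≤ i) (hin : i ≤ n)
    (hj1 : 1 ≤ j) (hjn : j ≤ n) (hj'1 : 1 ≤ j') (hj'n : j' ≤ n)
    (ha : cdist n i j' ≤ cdist n i j) :
    ccfun n x j' j = ∑ t ∈ Finset.Ico (cdist n i j') (cdist n i j + 1), cwt x (cpt n i t) := by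
  have hDn : cdist n i j < n := cdist_lt n i j hi1 hin hj1 hjn
  rw [ccfun_eq_sum, cIcc_eq_image n i j j' hi1 hin hj1 hjn hj'1 hj'n ha, Finset.sum_image]
  intro t ht u hu htu
  rw [Finset.mem_coe, Finset.mem_Ico] at ht hu
  have h1 := cpt_cdist n i t hi1 hin (by omega)
  have h2 := cpt_cdist n i u hi1 hin (by omega)
  rw [htu] at h1
  omega


lemma main_in (n : ℕ) (x : Finset ℕ) (i j : ℕ)
    (hi1 : 1 ≤ i) (hin : i ≤ n) (hix : i ∈ x)
    (h : IsCPairIn n x i j) : j ∉ x ∧ IsCPairOut n x j i := by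
  obtain ⟨hj, hz, hmin⟩ := h
  rw [Finset.mem_Icc] at hj
  obtain ⟨hj1, hjn⟩ := hj
  set D := cdist n i j with hDdef
  have hDn : D < n := cdist_lt n i j hi1 hin hj1 hjn
  set S : ℕ → ℤ := fun d => ∑ t ∈ Finset.range d, cwt x (cpt n i t) with hSdef
  -- ccfun from i to the point at distance d equals S (d+1)
  have hSi : ∀ d, d < n → ccfun n x i (cpt n i d) = S (d + 1) := by
    intro d hd
    obtain ⟨hp1, hpn⟩ := cpt_mem n i d hi1 hin hd
    have hcc := ccfun_tail n x i (cpt n i d) i hi1 hin hp1 hpn hi1 hin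
      (by rw [cdist_self]; omega)
    rw [cdist_self, cpt_cdist n i d hi1 hin hd] at hcc
    rw [hcc, hSdef]; simp only [Finset.range_eq_Ico]
  have hz' : S (D + 1) = 0 := by
    have := hSi D hDn
    rw [cpt_of_cdist n i j hi1 hin hj1 hjn] at this
    rw [← this, hz]
  have hS1 : S 1 = 1 := by
    rw [hSdef]
    simp [Finset.sum_range_one, cpt_zero n i hin, cwt, hix]
  have hmin' : ∀ d, 1 ≤ d → d ≤ D → S d ≠ 0 := by
    intro d h1 h2 h0
    have hd : d - 1 < n := by omega
    obtain ⟨hb1, hbn⟩ := cpt_mem n i (d-1) hi1 hin hd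
    have hcc : ccfun n x i (cpt n i (d-1)) = 0 := by
      rw [hSi (d-1) hd]
      rw [show d - 1 + 1 = d by omega]
      exact h0
    have hle := hmin (cpt n i (d-1)) (Finset.mem_Icc.mpr ⟨hb1, hbn⟩) hcc
    rw [card_cIcc n i j hi1 hin hj1 hjn, card_cIcc n i _ hi1 hin hb1 hbn,
        cpt_cdist n i (d-1) hi1 hin hd] at hle
    omega
  have key : ∀ d, 1 ≤ d → d ≤ D → 1 ≤ S d := by
    intro d
    induction d with
    | zero => omega
    | succ m ih =>
      intro h1 h2
      rcases Nat.eq_zero_or_pos m with hm | hm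
      · subst hm
        show 1 ≤ S 1
        omega
      · have hSm := ih hm (by omega)
        have hstep : S (m + 1) = S m + cwt x (cpt n i m) := Finset.sum_range_succ _ m
        have hne := hmin' (m + 1) h1 h2
        rcases cwt_cases x (cpt n i m) with hw | hw <;> omega
  have hD1 : 1 ≤ D := by
    by_contra hc
    have : D = 0 := by omega
    rw [this] at hz'
    have : S 1 = 0 := hz'
    omega
  have hptD : cpt n i D = j := cpt_of_cdist n i j hi1 hin hj1 hjn
  have hjx : j ∉ x := by
    intro hjx'
    have hstep : S (D + 1) = S D + cwt x (cpt n i D) := Finset.sum_range_succ _ D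
    have hSD := key D hD1 le_rfl
    have hw : cwt x (cpt n i D) = 1 := by rw [hptD]; simp [cwt, hjx']
    omega
  refine ⟨hjx, Finset.mem_Icc.mpr ⟨hi1, hin⟩, hz, ?_⟩
  intro j' hj' hcc
  rw [Finset.mem_Icc] at hj'
  obtain ⟨hj'1, hj'n⟩ := hj'
  rw [card_cIcc n i j hi1 hin hj1 hjn, card_cIcc n j' j hj'1 hj'n hj1 hjn]
  by_contra hlt
  push_neg at hlt
  set a := cdist n i j' with hadef
  by_cases haD : a ≤ D
  · -- then ccfun n x j' j = -(S a)
    have he : cdist n j' j = D - a := cdist_sub n i j j' hi1 hin hj1 hjn hj'1 hj'n haD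
    have ha1 : 1 ≤ a := by omega
    have htl := ccfun_tail n x i j j' hi1 hin hj1 hjn hj'1 hj'n haD
    have hsplit : S a + ∑ t ∈ Finset.Ico a (D + 1), cwt x (cpt n i t) = S (D + 1) := by
      rw [hSdef]
      simp only [Finset.range_eq_Ico]
      exact Finset.sum_Ico_consecutive _ (by omega) (by omega)
    have hSa := key a ha1 haD
    rw [htl] at hcc
    rw [← hadef, ← hDdef] at hcc
    omega
  · have := cdist_lb n i j j' hi1 hin hj1 hjn hj'1 hj'n (by omega)
    omega

lemma mem_refl_compl (n : ℕ) (x : Finset ℕ) (p : ℕ) (hp1 : 1 ≤ p) (hpn : p ≤ n) :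
    (n + 1 - p) ∈ (Finset.Icc 1 n \ x).image (fun k => n + 1 - k) ↔ p ∉ x := by
  simp only [Finset.mem_image, Finset.mem_sdiff, Finset.mem_Icc]
  constructor
  · rintro ⟨b, ⟨⟨hb1, hbn⟩, hbx⟩, hb⟩
    have : b = p := by omega
    rwa [← this]
  · intro hpx
    exact ⟨p, ⟨⟨hp1, hpn⟩, hpx⟩, rfl⟩

lemma ccfun_refl (n : ℕ) (x : Finset ℕ) (a b : ℕ)
    (ha1 : 1 ≤ a) (han : a ≤ n) (hb1 : 1 ≤ b) (hbn : b ≤ n) :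
    ccfun n ((Finset.Icc 1 n \ x).image (fun k => n + 1 - k)) (n + 1 - b) (n + 1 - a)
      = - ccfun n x a b := by
  set y := (Finset.Icc 1 n \ x).image (fun k => n + 1 - k) with hy
  rw [ccfun_eq_sum, ccfun_eq_sum, ← Finset.sum_neg_distrib]
  have hrb1 : 1 ≤ n + 1 - b := by omega
  have hrbn : n + 1 - b ≤ n := by omega
  have hra1 : 1 ≤ n + 1 - a := by omega
  have hran : n + 1 - a ≤ n := by omega
  apply Finset.sum_nbij' (fun p => n + 1 - p) (fun q => n + 1 - q)
  · intro p hp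
    rw [mem_cIcc_iff n _ _ _ hrb1 hrbn hra1 hran] at hp
    obtain ⟨hp1, hpn, hpd⟩ := hp
    rw [mem_cIcc_iff n a b _ ha1 han hb1 hbn]
    refine ⟨by omega, by omega, ?_⟩
    have e1 : cdist n (n+1-b) (n+1-a) = cdist n a b := cdist_rev n a b ha1 han hb1 hbn
    have e2 : cdist n (n+1-b) p = cdist n (n+1-p) b := by
      have := cdist_rev n (n+1-p) b (by omega) (by omega) hb1 hbn
      rw [show n + 1 - (n + 1 - p) = p by omega] at this
      exact this
    rw [e1, e2] at hpd
    rw [cdist_flip n a b (n+1-p) ha1 han hb1 hbn (by omega) (by omega)]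
    exact hpd
  · intro q hq
    rw [mem_cIcc_iff n a b q ha1 han hb1 hbn] at hq
    obtain ⟨hq1, hqn, hqd⟩ := hq
    rw [mem_cIcc_iff n _ _ _ hrb1 hrbn hra1 hran]
    refine ⟨by omega, by omega, ?_⟩
    have e1 : cdist n (n+1-b) (n+1-a) = cdist n a b := cdist_rev n a b ha1 han hb1 hbn
    have e2 : cdist n (n+1-b) (n+1-q) = cdist n q b := cdist_rev n q b hq1 hqn hb1 hbn
    rw [e1, e2]
    rw [← cdist_flip n a b q ha1 han hb1 hbn hq1 hqn]
    exact hqd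
  · intro p hp
    rw [mem_cIcc_iff n _ _ _ hrb1 hrbn hra1 hran] at hp
    omega
  · intro q hq
    rw [mem_cIcc_iff n a b q ha1 han hb1 hbn] at hq
    omega
  · intro p hp
    rw [mem_cIcc_iff n _ _ _ hrb1 hrbn hra1 hran] at hp
    obtain ⟨hp1, hpn, _⟩ := hp
    have hmem := mem_refl_compl n x (n + 1 - p) (by omega) (by omega)
    rw [show n + 1 - (n + 1 - p) = p by omega] at hmem
    rw [← hy] at hmem
    unfold cwt
    rcases em ((n + 1 - p) ∈ x) with hpx | hpx
    · rw [if_pos hpx, if_neg (by rw [hmem]; simp [hpx])]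
    · rw [if_neg hpx, if_pos (by rw [hmem]; exact hpx)]
      simp

lemma main_out (n : ℕ) (x : Finset ℕ) (i j : ℕ)
    (hi1 : 1 ≤ i) (hin : i ≤ n) (hix : i ∉ x)
    (h : IsCPairOut n x i j) : j ∈ x ∧ IsCPairIn n x j i := by
  obtain ⟨hjmem, hz, hmin⟩ := h
  rw [Finset.mem_Icc] at hjmem
  obtain ⟨hj1, hjn⟩ := hjmem
  have hiy : (n + 1 - i) ∈ (Finset.Icc 1 n \ x).image (fun k => n + 1 - k) :=
    (mem_refl_compl n x i hi1 hin).mpr hix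
  have h' : IsCPairIn n ((Finset.Icc 1 n \ x).image (fun k => n + 1 - k))
      (n + 1 - i) (n + 1 - j) := by
    refine ⟨Finset.mem_Icc.mpr ⟨by omega, by omega⟩, ?_, ?_⟩
    · rw [ccfun_refl n x j i hj1 hjn hi1 hin, hz, neg_zero]
    · intro j' hj' hcc
      rw [Finset.mem_Icc] at hj'
      obtain ⟨hj'1, hj'n⟩ := hj'
      have hj'' : j' = n + 1 - (n + 1 - j') := by omega
      rw [hj''] at hcc
      rw [ccfun_refl n x (n + 1 - j') i (by omega) (by omega) hi1 hin] at hcc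
      have hle := hmin (n + 1 - j') (Finset.mem_Icc.mpr ⟨by omega, by omega⟩) (by omega)
      have c1 : (cIcc n (n+1-i) (n+1-j)).card = (cIcc n j i).card := by
        rw [card_cIcc n _ _ (by omega) (by omega) (by omega) (by omega),
            card_cIcc n j i hj1 hjn hi1 hin, cdist_rev n j i hj1 hjn hi1 hin]
      have c2 : (cIcc n (n+1-i) j').card = (cIcc n (n+1-j') i).card := by
        rw [card_cIcc n _ _ (by omega) (by omega) hj'1 hj'n,
            card_cIcc n _ i (by omega) (by omega) hi1 hin]
        have := cdist_rev n (n+1-j') i (by omega) (by omega) hi1 hin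
        rw [show n + 1 - (n + 1 - j') = j' by omega] at this
        omega
      omega
  obtain ⟨hq, hout⟩ := main_in n _ (n + 1 - i) (n + 1 - j) (by omega) (by omega) hiy h'
  have hjx : j ∈ x := by
    by_contra hjx'
    exact hq ((mem_refl_compl n x j hj1 hjn).mpr hjx')
  refine ⟨hjx, Finset.mem_Icc.mpr ⟨hi1, hin⟩, hz, ?_⟩
  intro j'' hj'' hcc
  rw [Finset.mem_Icc] at hj''
  obtain ⟨hj''1, hj''n⟩ := hj''
  have hcc' : ccfun n ((Finset.Icc 1 n \ x).image (fun k => n + 1 - k))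
      (n + 1 - j'') (n + 1 - j) = 0 := by
    rw [ccfun_refl n x j j'' hj1 hjn hj''1 hj''n, hcc, neg_zero]
  have hle := hout.2.2 (n + 1 - j'') (Finset.mem_Icc.mpr ⟨by omega, by omega⟩) hcc'
  have c1 : (cIcc n (n+1-i) (n+1-j)).card = (cIcc n j i).card := by
    rw [card_cIcc n _ _ (by omega) (by omega) (by omega) (by omega),
        card_cIcc n j i hj1 hjn hi1 hin, cdist_rev n j i hj1 hjn hi1 hin]
  have c2 : (cIcc n (n+1-j'') (n+1-j)).card = (cIcc n j j'').card := by
    rw [card_cIcc n _ _ (by omega) (by omega) (by omega) (by omega),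
        card_cIcc n j j'' hj1 hjn hj''1 hj''n, cdist_rev n j j'' hj1 hjn hj''1 hj''n]
  omega


/-- if the circular pair `pr'_x(i) = j` exists, then `pr'_x(j)` exists
and equals `i`, and exactly one of `i`, `j` lies in `x` (`csg(x)_i ≠ csg(x)_j`). -/
theorem stmt_14 (n : ℕ) (x : Finset ℕ) (hx : x ⊆ Finset.Icc 1 n)
    (i j : ℕ) (hi : i ∈ Finset.Icc 1 n) :
    (i ∈ x → IsCPairIn n x i j → j ∉ x ∧ IsCPairOut n x j i) ∧
    (i ∉ x → IsCPairOut n x i j → j ∈ x ∧ IsCPairIn n x j i) := by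
  rw [Finset.mem_Icc] at hi
  exact ⟨fun hix h => main_in n x i j hi.1 hi.2 hix h,
         fun hix h => main_out n x i j hi.1 hi.2 hix h⟩
end

section
/- Let x ⊆ [n], |x| = k, n/2 ≤ k ≤ n, and let i₁ < ... < i_t be the elements of *(x) ∩ x (starred positions in x w.r.t. the linear signature) and j₁ < ... < j_{t−2k+n} the elements of *(x)\x. Then for 1 ≤ r ≤ 2k−n one has csg(x)_{i_r} = * (so |*'(x)| = 2k − n); for 2k−n < r ≤ t one has csg(x)_{i_r} = 1 with circular pair pr'_x(i_r) = j_{t+1−r}; and for 1 ≤ s ≤ t−2k+n, csg(x)_{j_s} = 0 with pr'_x(j_s) = i_{t+1−s}. Moreover, at every position not in *(x) the circular signature agrees with the linear signature and circular pairs agree with linear pairs. -/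
/-- `csg(x)_i = *`: position `i` has no circular pair. -/
def CStar (n : ℕ) (x : Finset ℕ) (i : ℕ) : Prop :=
  (i ∈ x ∧ ¬∃ j ∈ Finset.Icc 1 n, ccfun n x i j = 0) ∨
  (i ∉ x ∧ ¬∃ j ∈ Finset.Icc 1 n, ccfun n x j i = 0)

namespace Aux16
open Finset

/-- signed count of a finite set w.r.t. x -/
def cset (x s : Finset ℕ) : ℤ := ((s ∩ x).card : ℤ) - ((s \ x).card : ℤ)

lemma cfun_eq_cset (x : Finset ℕ) (i j : ℕ) : cfun x i j = cset x (Finset.Icc i j) := rfl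

lemma cset_union (x s t : Finset ℕ) (h : Disjoint s t) :
    cset x (s ∪ t) = cset x s + cset x t := by
  unfold cset
  rw [union_inter_distrib_right, union_sdiff_distrib,
    card_union_of_disjoint (h.mono inter_subset_left inter_subset_left),
    card_union_of_disjoint (h.mono sdiff_subset sdiff_subset)]
  push_cast; ring

/-- prefix sums -/
def pf (x : Finset ℕ) (j : ℕ) : ℤ := cset x (Finset.Icc 1 j)

lemma pf_zero (x : Finset ℕ) : pf x 0 = 0 := by simp [pf, cset]

lemma pf_succ (x : Finset ℕ) (j : ℕ) :
    pf x (j + 1) = pf x j + (if j + 1 ∈ x then 1 else -1) := by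
  have h : Finset.Icc 1 (j+1) = Finset.Icc 1 j ∪ {j+1} := by
    ext a; simp [Finset.mem_Icc]; omega
  have hd : Disjoint (Finset.Icc 1 j) ({j+1} : Finset ℕ) := by
    simp [Finset.disjoint_singleton_right, Finset.mem_Icc]
  rw [pf, h, cset_union _ _ _ hd]
  congr 1
  by_cases hj : j + 1 ∈ x
  · simp [cset, hj, Finset.singleton_inter_of_mem, Finset.sdiff_eq_empty_iff_subset]
  · rw [cset, Finset.singleton_inter_of_notMem hj,
      Finset.sdiff_eq_self_of_disjoint (by simp [hj])]
    simp [hj]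

lemma pf_step (x : Finset ℕ) (j : ℕ) :
    pf x (j + 1) = pf x j + 1 ∨ pf x (j + 1) = pf x j - 1 := by
  rw [pf_succ]; by_cases hj : j + 1 ∈ x <;> simp [hj, sub_eq_add_neg]

lemma cfun_pf (x : Finset ℕ) (a b : ℕ) (h : a ≤ b) :
    cfun x (a + 1) b = pf x b - pf x a := by
  have hu : Finset.Icc 1 b = Finset.Icc 1 a ∪ Finset.Icc (a+1) b := by
    ext m; simp [Finset.mem_Icc, Finset.mem_union]; omega
  have hd : Disjoint (Finset.Icc 1 a) (Finset.Icc (a+1) b) := by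
    rw [Finset.disjoint_left]; intro m hm hm'; simp [Finset.mem_Icc] at hm hm'; omega
  have := cset_union x _ _ hd
  rw [← hu] at this
  rw [cfun_eq_cset]; rw [show (pf x b : ℤ) = _ from this]; unfold pf; ring


lemma pf_ivt_down (x : Finset ℕ) (c : ℤ) (a b : ℕ) (hab : a ≤ b) (ha : c ≤ pf x a)
    (hb : pf x b ≤ c) : ∃ j, a ≤ j ∧ j ≤ b ∧ pf x j = c := by
  induction b, hab using Nat.le_induction with
  | base => exact ⟨a, le_refl a, le_refl a, le_antisymm hb ha⟩
  | succ b hab ih =>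
    by_cases h : pf x b ≤ c
    · obtain ⟨j, h1, h2, h3⟩ := ih h
      exact ⟨j, h1, by omega, h3⟩
    · push_neg at h
      rcases pf_step x b with hs | hs
      · omega
      · exact ⟨b+1, by omega, le_refl _, by omega⟩

lemma pf_ivt_up (x : Finset ℕ) (c : ℤ) (a b : ℕ) (hab : a ≤ b) (ha : pf x a ≤ c)
    (hb : c ≤ pf x b) : ∃ j, a ≤ j ∧ j ≤ b ∧ pf x j = c := by
  induction b, hab using Nat.le_induction with
  | base => exact ⟨a, le_refl a, le_refl a, le_antisymm ha hb⟩
  | succ b hab ih =>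
    by_cases h : c ≤ pf x b
    · obtain ⟨j, h1, h2, h3⟩ := ih h
      exact ⟨j, h1, by omega, h3⟩
    · push_neg at h
      rcases pf_step x b with hs | hs
      · exact ⟨b+1, by omega, le_refl _, by omega⟩
      · omega

lemma sgv_in_iff (n : ℕ) (x : Finset ℕ) (i : ℕ) (hi : i ∈ x) :
    sgv n x i = 2 ↔ ¬ ∃ j ∈ Finset.Ioc i n, cfun x i j = 0 := by
  unfold sgv
  rw [if_pos hi]
  by_cases h : ∃ j ∈ Finset.Ioc i n, cfun x i j = 0
  · rw [if_pos h]; exact iff_of_false (by omega) (not_not.2 h)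
  · rw [if_neg h]; exact iff_of_true rfl h

lemma sgv_out_iff (n : ℕ) (x : Finset ℕ) (j : ℕ) (hj : j ∉ x) :
    sgv n x j = 2 ↔ ¬ ∃ i ∈ Finset.Ico 1 j, cfun x i j = 0 := by
  unfold sgv
  rw [if_neg hj]
  by_cases h : ∃ i ∈ Finset.Ico 1 j, cfun x i j = 0
  · rw [if_pos h]; exact iff_of_false (by omega) (not_not.2 h)
  · rw [if_neg h]; exact iff_of_true rfl h

lemma pf_mem_succ (x : Finset ℕ) (a : ℕ) (h : a + 1 ∈ x) : pf x (a+1) = pf x a + 1 := by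
  rw [pf_succ, if_pos h]

lemma pf_notmem_succ (x : Finset ℕ) (a : ℕ) (h : a + 1 ∉ x) : pf x (a+1) = pf x a - 1 := by
  rw [pf_succ, if_neg h]; ring

lemma starIn_iff (n : ℕ) (x : Finset ℕ) (i : ℕ) (hi : i ∈ x) (h1 : 1 ≤ i) :
    sgv n x i = 2 ↔ ∀ j, i ≤ j → j ≤ n → pf x (i-1) < pf x j := by
  obtain ⟨a, rfl⟩ : ∃ a, i = a + 1 := ⟨i - 1, by omega⟩
  simp only [Nat.add_sub_cancel]
  rw [sgv_in_iff n x _ hi]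
  constructor
  · intro h j hij hjn
    by_contra hle
    push_neg at hle
    have hia : pf x (a+1) = pf x a + 1 := pf_mem_succ x a hi
    have hne : a + 1 ≠ j := by intro e; rw [← e] at hle; omega
    obtain ⟨j', hj1, hj2, hj3⟩ := pf_ivt_down x (pf x a) (a+1) j hij (by omega) hle
    have : j' ≠ a + 1 := by intro e; rw [e] at hj3; omega
    exact h ⟨j', Finset.mem_Ioc.2 ⟨by omega, by omega⟩, by
      rw [cfun_pf x a j' (by omega), hj3]; ring⟩
  · rintro h ⟨j, hjm, hj0⟩
    rw [Finset.mem_Ioc] at hjm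
    rw [cfun_pf x a j (by omega)] at hj0
    have := h j (by omega) hjm.2
    omega

lemma starOut_iff (n : ℕ) (x : Finset ℕ) (j : ℕ) (hj : j ∉ x) (h1 : 1 ≤ j) :
    sgv n x j = 2 ↔ ∀ a, a < j → pf x j < pf x a := by
  obtain ⟨b, rfl⟩ : ∃ b, j = b + 1 := ⟨j - 1, by omega⟩
  rw [sgv_out_iff n x _ hj]
  have hjb : pf x (b+1) = pf x b - 1 := pf_notmem_succ x b hj
  constructor
  · intro h a ha
    by_contra hle
    push_neg at hle
    have hab : a ≤ b := by omega
    obtain ⟨b', hb1, hb2, hb3⟩ := pf_ivt_up x (pf x (b+1)) a b hab hle (by omega)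
    have : b' ≠ b := by intro e; rw [e] at hb3; omega
    exact h ⟨b' + 1, Finset.mem_Ico.2 ⟨by omega, by omega⟩, by
      rw [cfun_pf x b' (b+1) (by omega), hb3]; ring⟩
  · rintro h ⟨i, him, hi0⟩
    rw [Finset.mem_Ico] at him
    obtain ⟨c, rfl⟩ : ∃ c, i = c + 1 := ⟨i - 1, by omega⟩
    rw [cfun_pf x c (b+1) (by omega)] at hi0
    have := h c (by omega)
    omega


lemma cfun_self_mem (x : Finset ℕ) (i : ℕ) (h1 : 1 ≤ i) (hi : i ∈ x) : cfun x i i = 1 := by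
  obtain ⟨a, rfl⟩ : ∃ a, i = a + 1 := ⟨i - 1, by omega⟩
  rw [show a + 1 = (a+1) from rfl, cfun_pf x a (a+1) (by omega), pf_mem_succ x a hi]; ring

lemma cfun_self_notmem (x : Finset ℕ) (i : ℕ) (h1 : 1 ≤ i) (hi : i ∉ x) : cfun x i i = -1 := by
  obtain ⟨a, rfl⟩ : ∃ a, i = a + 1 := ⟨i - 1, by omega⟩
  rw [cfun_pf x a (a+1) (by omega), pf_notmem_succ x a hi]; ring

lemma ccfun_eq_cset (n : ℕ) (x : Finset ℕ) (i j : ℕ) : ccfun n x i j = cset x (cIcc n i j) := rfl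

lemma cIcc_linear (n i j : ℕ) (h : i ≤ j) : cIcc n i j = Finset.Icc i j := by
  rw [cIcc, if_pos h]

lemma ccfun_linear (n : ℕ) (x : Finset ℕ) (i j : ℕ) (h : i ≤ j) :
    ccfun n x i j = cfun x i j := by
  rw [ccfun_eq_cset, cIcc_linear n i j h, cfun_eq_cset]

lemma cIcc_wrap (n i j : ℕ) (h : j < i) : cIcc n i j = Finset.Icc i n ∪ Finset.Icc 1 j := by
  rw [cIcc, if_neg (by omega)]

lemma cIcc_wrap_disj (n i j : ℕ) (h : j < i) :
    Disjoint (Finset.Icc i n) (Finset.Icc 1 j) := by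
  rw [Finset.disjoint_left]; intro m hm hm'
  simp only [Finset.mem_Icc] at hm hm'; omega

lemma ccfun_wrap (n : ℕ) (x : Finset ℕ) (i j : ℕ) (h : j < i) (h1 : 1 ≤ i) (hi : i ≤ n) :
    ccfun n x i j = (pf x n - pf x (i-1)) + pf x j := by
  obtain ⟨a, rfl⟩ : ∃ a, i = a + 1 := ⟨i - 1, by omega⟩
  rw [ccfun_eq_cset, cIcc_wrap n (a+1) j h, cset_union x _ _ (cIcc_wrap_disj n (a+1) j h),
    ← cfun_eq_cset, cfun_pf x a n (by omega)]
  simp only [Nat.add_sub_cancel]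
  rfl

lemma card_cIcc_linear (n i j : ℕ) (h : i ≤ j) : (cIcc n i j).card = j + 1 - i := by
  rw [cIcc_linear n i j h, Nat.card_Icc]

lemma card_cIcc_wrap (n i j : ℕ) (h : j < i) : (cIcc n i j).card = (n + 1 - i) + j := by
  rw [cIcc_wrap n i j h, Finset.card_union_of_disjoint (cIcc_wrap_disj n i j h),
    Nat.card_Icc, Nat.card_Icc]
  omega

/-- the minimum prefix value -/
noncomputable def mv (n : ℕ) (x : Finset ℕ) : ℤ :=
  ((Finset.Icc 0 n).image (pf x)).min' (Finset.Nonempty.image ⟨0, by simp⟩ _)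

lemma mv_le (n : ℕ) (x : Finset ℕ) (a : ℕ) (ha : a ≤ n) : mv n x ≤ pf x a :=
  Finset.min'_le _ _ (Finset.mem_image_of_mem _ (by simp [Finset.mem_Icc, ha]))

lemma exists_mv (n : ℕ) (x : Finset ℕ) : ∃ a, a ≤ n ∧ pf x a = mv n x := by
  have := Finset.min'_mem ((Finset.Icc 0 n).image (pf x))
    (Finset.Nonempty.image ⟨0, by simp⟩ _)
  rw [Finset.mem_image] at this
  obtain ⟨a, ha, h⟩ := this
  exact ⟨a, by simp [Finset.mem_Icc] at ha; omega, h⟩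

lemma mv_nonpos (n : ℕ) (x : Finset ℕ) : mv n x ≤ 0 := by
  have := mv_le n x 0 (by omega)
  rw [pf_zero] at this; exact this

lemma pf_attained (n : ℕ) (x : Finset ℕ) (v : ℤ) (hv1 : mv n x ≤ v) (hv2 : v ≤ pf x n) :
    ∃ a, a ≤ n ∧ pf x a = v := by
  obtain ⟨a0, ha0, hpa0⟩ := exists_mv n x
  obtain ⟨b, hb1, hb2, hb3⟩ := pf_ivt_up x v a0 n ha0 (by omega) hv2
  exact ⟨b, hb2, hb3⟩

section Main
variable (n k : ℕ) (x : Finset ℕ)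

lemma pf_n (hx : x ⊆ Finset.Icc 1 n) (hk : x.card = k) :
    pf x n = 2 * (k : ℤ) - n := by
  have hkn : k ≤ n := by
    have := Finset.card_le_card hx
    simpa [hk, Nat.card_Icc] using this
  have h1 : Finset.Icc 1 n ∩ x = x := Finset.inter_eq_right.2 hx
  have h2 : (Finset.Icc 1 n \ x).card = n - k := by
    rw [Finset.card_sdiff_of_subset hx, Nat.card_Icc, hk]; omega
  rw [pf, cset, h1, h2, hk]
  have : ((n - k : ℕ) : ℤ) = (n : ℤ) - k := by omega
  rw [this]; ring

/-- construction of starred elements outside x with a given prefix value -/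
lemma exists_starOut (hx : x ⊆ Finset.Icc 1 n) (hk : x.card = k) (hn2 : n ≤ 2 * k)
    (v : ℤ) (hv1 : mv n x ≤ v) (hv2 : v ≤ -1) :
    ∃ j, 1 ≤ j ∧ j ≤ n ∧ j ∉ x ∧ pf x j = v ∧ sgv n x j = 2 ∧
      ∀ a, a < j → pf x a ≠ v := by
  classical
  have hT : pf x n = 2 * (k : ℤ) - n := pf_n n k x hx hk
  have hS : ((Finset.Icc 0 n).filter (fun a => pf x a = v)).Nonempty := by
    obtain ⟨a, ha, hpa⟩ := pf_attained n x v hv1 (by omega)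
    exact ⟨a, Finset.mem_filter.2 ⟨Finset.mem_Icc.2 ⟨by omega, ha⟩, hpa⟩⟩
  obtain ⟨j, hjmem, hjle⟩ := Finset.exists_min_image _ id hS
  rw [Finset.mem_filter, Finset.mem_Icc] at hjmem
  obtain ⟨⟨-, hjn⟩, hpj⟩ := hjmem
  have hmin : ∀ a, a < j → pf x a ≠ v := by
    intro a ha hpa
    have := hjle a (Finset.mem_filter.2 ⟨Finset.mem_Icc.2 ⟨by omega, by omega⟩, hpa⟩)
    simp only [id] at this; omega
  have hj1 : 1 ≤ j := by
    rcases Nat.eq_zero_or_pos j with h0 | h0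
    · rw [h0, pf_zero] at hpj; omega
    · omega
  have hjx : j ∉ x := by
    intro hmem
    obtain ⟨c, hc⟩ : ∃ c, j = c + 1 := ⟨j - 1, by omega⟩
    have hcc : pf x (c+1) = pf x c + 1 := pf_mem_succ x c (hc ▸ hmem)
    obtain ⟨b, hb1, hb2, hb3⟩ := pf_ivt_down x v 0 c (by omega)
      (by rw [pf_zero]; omega) (by rw [hc] at hpj; omega)
    exact hmin b (by omega) hb3
  have hpj1 : pf x (j-1) = v + 1 := by
    obtain ⟨c, hc⟩ : ∃ c, j = c + 1 := ⟨j - 1, by omega⟩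
    have := pf_notmem_succ x c (hc ▸ hjx)
    rw [hc] at hpj ⊢
    simp only [Nat.add_sub_cancel]; omega
  refine ⟨j, hj1, hjn, hjx, hpj, ?_, hmin⟩
  rw [starOut_iff n x j hjx hj1]
  intro a ha
  by_contra hle
  push_neg at hle
  obtain ⟨b, hb1, hb2, hb3⟩ := pf_ivt_up x v a (j-1) (by omega)
    (by omega) (by omega)
  exact hmin b (by omega) hb3

/-- construction of starred elements inside x with a given prefix value -/
lemma exists_starIn (hx : x ⊆ Finset.Icc 1 n) (hk : x.card = k) (hn2 : n ≤ 2 * k)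
    (v : ℤ) (hv1 : mv n x ≤ v) (hv2 : v ≤ pf x n - 1) :
    ∃ i, i ∈ x ∧ pf x (i-1) = v ∧ sgv n x i = 2 ∧
      ∀ a, a ≤ n → pf x a = v → a ≤ i - 1 := by
  classical
  have hT : pf x n = 2 * (k : ℤ) - n := pf_n n k x hx hk
  have hS : ((Finset.Icc 0 n).filter (fun a => pf x a = v)).Nonempty := by
    obtain ⟨a, ha, hpa⟩ := pf_attained n x v hv1 (by omega)
    exact ⟨a, Finset.mem_filter.2 ⟨Finset.mem_Icc.2 ⟨by omega, ha⟩, hpa⟩⟩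
  obtain ⟨a, hamem, hale⟩ := Finset.exists_max_image _ id hS
  rw [Finset.mem_filter, Finset.mem_Icc] at hamem
  obtain ⟨⟨-, han⟩, hpa⟩ := hamem
  have hmax : ∀ b, b ≤ n → pf x b = v → b ≤ a := by
    intro b hb hpb
    have := hale b (Finset.mem_filter.2 ⟨Finset.mem_Icc.2 ⟨by omega, hb⟩, hpb⟩)
    simp only [id] at this; omega
  have haltn : a < n := by
    rcases Nat.lt_or_ge a n with h | h
    · exact h
    · exfalso; have : a = n := by omega
      rw [this] at hpa; omega
  have hax : a + 1 ∈ x := by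
    by_contra hmem
    have hc : pf x (a+1) = pf x a - 1 := pf_notmem_succ x a hmem
    obtain ⟨b, hb1, hb2, hb3⟩ := pf_ivt_up x v (a+1) n (by omega) (by omega) (by omega)
    have := hmax b hb2 hb3
    omega
  refine ⟨a + 1, hax, by simp only [Nat.add_sub_cancel]; exact hpa, ?_, ?_⟩
  · rw [starIn_iff n x (a+1) hax (by omega)]
    simp only [Nat.add_sub_cancel]
    intro j hij hjn
    by_contra hle
    push_neg at hle
    have hpi : pf x (a+1) = pf x a + 1 := pf_mem_succ x a hax
    obtain ⟨b, hb1, hb2, hb3⟩ := pf_ivt_down x v (a+1) j hij (by omega) (by omega)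
    have := hmax b (by omega) hb3
    omega
  · simpa only [Nat.add_sub_cancel] using hmax

/-- starred elements outside x are below starred elements inside x -/
lemma sep (hx : x ⊆ Finset.Icc 1 n) (i j : ℕ)
    (hi : i ∈ x) (hsi : sgv n x i = 2)
    (hj1 : 1 ≤ j) (hjn : j ≤ n) (hjx : j ∉ x) (hsj : sgv n x j = 2) : j < i := by
  have hi1 : 1 ≤ i ∧ i ≤ n := by have := hx hi; simp [Finset.mem_Icc] at this; omega
  by_contra hle
  push_neg at hle
  have hij : i < j := by
    rcases Nat.lt_or_ge i j with h | h
    · exact h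
    · exfalso; have : i = j := by omega
      rw [this] at hi; exact hjx hi
  have h1 := (starIn_iff n x i hi hi1.1).1 hsi j (by omega) hjn
  have h2 := (starOut_iff n x j hjx hj1).1 hsj (i-1) (by omega)
  omega

/-- values are strictly monotone on starred elements of x -/
lemma starIn_mono (hx : x ⊆ Finset.Icc 1 n) (i i' : ℕ)
    (hi : i ∈ x) (hsi : sgv n x i = 2) (hi' : i' ∈ x) (hsi' : sgv n x i' = 2)
    (h : i < i') : pf x (i-1) < pf x (i'-1) := by
  have hb : 1 ≤ i ∧ i ≤ n := by have := hx hi; simp [Finset.mem_Icc] at this; omega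
  have hb' : 1 ≤ i' ∧ i' ≤ n := by have := hx hi'; simp [Finset.mem_Icc] at this; omega
  exact (starIn_iff n x i hi hb.1).1 hsi (i'-1) (by omega) (by omega)

/-- values are strictly antitone on starred elements outside x -/
lemma starOut_anti (j j' : ℕ)
    (hj1 : 1 ≤ j) (hjx : j ∉ x) (hsj : sgv n x j = 2)
    (hj1' : 1 ≤ j') (hjn' : j' ≤ n) (hjx' : j' ∉ x) (hsj' : sgv n x j' = 2)
    (h : j < j') : pf x j' < pf x j :=
  (starOut_iff n x j' hjx' hj1').1 hsj' j h


open Classical in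
lemma card_starIn (hx : x ⊆ Finset.Icc 1 n) (hk : x.card = k) (hn2 : n ≤ 2 * k) :
    ((x.filter (fun m => sgv n x m = 2)).card : ℤ) = pf x n - mv n x := by
  have hT : pf x n = 2 * (k : ℤ) - n := pf_n n k x hx hk
  set Sx := x.filter (fun m => sgv n x m = 2) with hSx
  have hmem : ∀ m ∈ Sx, m ∈ x ∧ sgv n x m = 2 ∧ 1 ≤ m ∧ m ≤ n := by
    intro m hm
    rw [hSx, Finset.mem_filter] at hm
    have := hx hm.1; rw [Finset.mem_Icc] at this
    exact ⟨hm.1, hm.2, this.1, this.2⟩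
  have hinj : Set.InjOn (fun m => pf x (m-1)) ↑Sx := by
    intro p hp q hq e
    rw [Finset.mem_coe] at hp hq
    obtain ⟨hp1, hp2, -, -⟩ := hmem p hp
    obtain ⟨hq1, hq2, -, -⟩ := hmem q hq
    by_contra hne
    rcases Nat.lt_or_ge p q with h | h
    · have := starIn_mono n x hx p q hp1 hp2 hq1 hq2 h; simp only at e; omega
    · have hqp : q < p := by omega
      have := starIn_mono n x hx q p hq1 hq2 hp1 hp2 hqp; simp only at e; omega
  have himg : Sx.image (fun m => pf x (m-1)) = Finset.Icc (mv n x) (pf x n - 1) := by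
    ext v
    rw [Finset.mem_image, Finset.mem_Icc]
    constructor
    · rintro ⟨m, hm, rfl⟩
      obtain ⟨hmx, hms, hm1, hmn⟩ := hmem m hm
      refine ⟨mv_le n x (m-1) (by omega), ?_⟩
      have := (starIn_iff n x m hmx hm1).1 hms n (by omega) le_rfl
      omega
    · rintro ⟨h1, h2⟩
      obtain ⟨i, hix, hiv, his, -⟩ := exists_starIn n k x hx hk hn2 v h1 h2
      exact ⟨i, by rw [hSx, Finset.mem_filter]; exact ⟨hix, his⟩, hiv⟩
  have := Finset.card_image_of_injOn hinj
  rw [himg, Int.card_Icc] at this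
  have hnn : (0:ℤ) ≤ pf x n - 1 + 1 - mv n x := by
    have := mv_nonpos n x; omega
  omega

open Classical in
lemma card_r (hx : x ⊆ Finset.Icc 1 n) (hk : x.card = k) (hn2 : n ≤ 2 * k)
    (i : ℕ) (hi : i ∈ x) (hsi : sgv n x i = 2) :
    (((x.filter (fun m => sgv n x m = 2)).filter (fun m => m ≤ i)).card : ℤ) =
      pf x (i-1) - mv n x + 1 := by
  have hT : pf x n = 2 * (k : ℤ) - n := pf_n n k x hx hk
  have hib : 1 ≤ i ∧ i ≤ n := by have := hx hi; rw [Finset.mem_Icc] at this; omega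
  set S := (x.filter (fun m => sgv n x m = 2)).filter (fun m => m ≤ i) with hS
  have hmem : ∀ m ∈ S, m ∈ x ∧ sgv n x m = 2 ∧ 1 ≤ m ∧ m ≤ n ∧ m ≤ i := by
    intro m hm
    rw [hS, Finset.mem_filter, Finset.mem_filter] at hm
    have := hx hm.1.1; rw [Finset.mem_Icc] at this
    exact ⟨hm.1.1, hm.1.2, this.1, this.2, hm.2⟩
  have hinj : Set.InjOn (fun m => pf x (m-1)) ↑S := by
    intro p hp q hq e
    rw [Finset.mem_coe] at hp hq
    obtain ⟨hp1, hp2, -, -, -⟩ := hmem p hp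
    obtain ⟨hq1, hq2, -, -, -⟩ := hmem q hq
    by_contra hne
    rcases Nat.lt_or_ge p q with h | h
    · have := starIn_mono n x hx p q hp1 hp2 hq1 hq2 h; simp only at e; omega
    · have hqp : q < p := by omega
      have := starIn_mono n x hx q p hq1 hq2 hp1 hp2 hqp; simp only at e; omega
  have himg : S.image (fun m => pf x (m-1)) = Finset.Icc (mv n x) (pf x (i-1)) := by
    ext v
    rw [Finset.mem_image, Finset.mem_Icc]
    constructor
    · rintro ⟨m, hm, rfl⟩
      obtain ⟨hmx, hms, hm1, hmn, hmi⟩ := hmem m hm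
      refine ⟨mv_le n x (m-1) (by omega), ?_⟩
      rcases Nat.lt_or_ge m i with h | h
      · have := starIn_mono n x hx m i hmx hms hi hsi h; omega
      · have : m = i := by omega
        rw [this]
    · rintro ⟨h1, h2⟩
      have hvn : v ≤ pf x n - 1 := by
        have := (starIn_iff n x i hi hib.1).1 hsi n (by omega) le_rfl
        omega
      obtain ⟨i', hix, hiv, his, -⟩ := exists_starIn n k x hx hk hn2 v h1 hvn
      refine ⟨i', ?_, hiv⟩
      rw [hS, Finset.mem_filter, Finset.mem_filter]
      refine ⟨⟨hix, his⟩, ?_⟩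
      by_contra hgt
      push_neg at hgt
      have := starIn_mono n x hx i i' hi hsi hix his hgt
      omega
  have := Finset.card_image_of_injOn hinj
  rw [himg, Int.card_Icc] at this
  have h1 : mv n x ≤ pf x (i-1) := mv_le n x (i-1) (by omega)
  omega

open Classical in
lemma card_s (hx : x ⊆ Finset.Icc 1 n) (hk : x.card = k) (hn2 : n ≤ 2 * k)
    (j : ℕ) (hj1 : 1 ≤ j) (hjn : j ≤ n) (hjx : j ∉ x) (hsj : sgv n x j = 2) :
    ((((Finset.Icc 1 n).filter (fun m => sgv n x m = 2 ∧ m ∉ x)).filter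
        (fun m => m ≤ j)).card : ℤ) = - pf x j := by
  have hT : pf x n = 2 * (k : ℤ) - n := pf_n n k x hx hk
  set S := ((Finset.Icc 1 n).filter (fun m => sgv n x m = 2 ∧ m ∉ x)).filter
    (fun m => m ≤ j) with hS
  have hmem : ∀ m ∈ S, 1 ≤ m ∧ m ≤ n ∧ sgv n x m = 2 ∧ m ∉ x ∧ m ≤ j := by
    intro m hm
    rw [hS, Finset.mem_filter, Finset.mem_filter, Finset.mem_Icc] at hm
    exact ⟨hm.1.1.1, hm.1.1.2, hm.1.2.1, hm.1.2.2, hm.2⟩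
  have hinj : Set.InjOn (pf x) ↑S := by
    intro p hp q hq e
    rw [Finset.mem_coe] at hp hq
    obtain ⟨hp1, hp2, hp3, hp4, -⟩ := hmem p hp
    obtain ⟨hq1, hq2, hq3, hq4, -⟩ := hmem q hq
    by_contra hne
    rcases Nat.lt_or_ge p q with h | h
    · have := starOut_anti n x p q hp1 hp4 hp3 hq1 hq2 hq4 hq3 h; omega
    · have hqp : q < p := by omega
      have := starOut_anti n x q p hq1 hq4 hq3 hp1 hp2 hp4 hp3 hqp; omega
  have himg : S.image (pf x) = Finset.Icc (pf x j) (-1) := by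
    ext v
    rw [Finset.mem_image, Finset.mem_Icc]
    constructor
    · rintro ⟨m, hm, rfl⟩
      obtain ⟨hm1, hm2, hm3, hm4, hm5⟩ := hmem m hm
      constructor
      · rcases Nat.lt_or_ge m j with h | h
        · have := starOut_anti n x m j hm1 hm4 hm3 hj1 hjn hjx hsj h; omega
        · have : m = j := by omega
          rw [this]
      · have := (starOut_iff n x m hm4 hm1).1 hm3 0 (by omega)
        rw [pf_zero] at this; omega
    · rintro ⟨h1, h2⟩
      have hmvj : mv n x ≤ v := le_trans (mv_le n x j hjn) h1
      obtain ⟨j', hj1', hjn', hjx', hjv', hjs', -⟩ :=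
        exists_starOut n k x hx hk hn2 v hmvj h2
      refine ⟨j', ?_, hjv'⟩
      rw [hS, Finset.mem_filter, Finset.mem_filter, Finset.mem_Icc]
      refine ⟨⟨⟨hj1', hjn'⟩, hjs', hjx'⟩, ?_⟩
      by_contra hgt
      push_neg at hgt
      have := starOut_anti n x j j' hj1 hjx hsj hj1' hjn' hjx' hjs' hgt
      omega
  have := Finset.card_image_of_injOn hinj
  rw [himg, Int.card_Icc] at this
  have h1 : pf x j ≤ -1 := by
    have := (starOut_iff n x j hjx hj1).1 hsj 0 (by omega)
    rw [pf_zero] at this; omega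
  omega


lemma cstar_of (hx : x ⊆ Finset.Icc 1 n) (i : ℕ) (hi : i ∈ x) (hsi : sgv n x i = 2)
    (h : pf x (i-1) - pf x n < mv n x) : CStar n x i := by
  have hib : 1 ≤ i ∧ i ≤ n := by have := hx hi; rw [Finset.mem_Icc] at this; omega
  left
  refine ⟨hi, ?_⟩
  rintro ⟨j, hjm, h0⟩
  rw [Finset.mem_Icc] at hjm
  rcases le_or_gt i j with hij | hij
  · rcases Nat.eq_or_lt_of_le hij with he | hlt
    · rw [← he, ccfun_linear n x i i le_rfl, cfun_self_mem x i hib.1 hi] at h0; omega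
    · rw [ccfun_linear n x i j hij] at h0
      exact ((sgv_in_iff n x i hi).1 hsi) ⟨j, Finset.mem_Ioc.2 ⟨hlt, hjm.2⟩, h0⟩
  · rw [ccfun_wrap n x i j hij hib.1 hib.2] at h0
    have := mv_le n x j hjm.2
    omega

lemma pair_in (hx : x ⊆ Finset.Icc 1 n) (hk : x.card = k) (hn2 : n ≤ 2 * k)
    (i : ℕ) (hi : i ∈ x) (hsi : sgv n x i = 2)
    (h : mv n x ≤ pf x (i-1) - pf x n) :
    ∃ j, 1 ≤ j ∧ j ≤ n ∧ j ∉ x ∧ sgv n x j = 2 ∧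
      pf x j = pf x (i-1) - pf x n ∧ IsCPairIn n x i j := by
  have hib : 1 ≤ i ∧ i ≤ n := by have := hx hi; rw [Finset.mem_Icc] at this; omega
  have hlt : pf x (i-1) < pf x n :=
    (starIn_iff n x i hi hib.1).1 hsi n (by omega) le_rfl
  obtain ⟨j, hj1, hjn, hjx, hjv, hjs, hmin⟩ :=
    exists_starOut n k x hx hk hn2 (pf x (i-1) - pf x n) h (by omega)
  have hji : j < i := sep n x hx i j hi hsi hj1 hjn hjx hjs
  refine ⟨j, hj1, hjn, hjx, hjs, hjv, Finset.mem_Icc.2 ⟨hj1, hjn⟩, ?_, ?_⟩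
  · rw [ccfun_wrap n x i j hji hib.1 hib.2]; omega
  · intro j' hj' h0'
    rw [Finset.mem_Icc] at hj'
    rcases le_or_gt i j' with hij | hij
    · exfalso
      rcases Nat.eq_or_lt_of_le hij with he | hlt'
      · rw [← he, ccfun_linear n x i i le_rfl, cfun_self_mem x i hib.1 hi] at h0'; omega
      · rw [ccfun_linear n x i j' hij] at h0'
        exact ((sgv_in_iff n x i hi).1 hsi) ⟨j', Finset.mem_Ioc.2 ⟨hlt', hj'.2⟩, h0'⟩
    · rw [ccfun_wrap n x i j' hij hib.1 hib.2] at h0'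
      have hjj' : j ≤ j' := by
        by_contra hgt
        push_neg at hgt
        exact hmin j' hgt (by omega)
      rw [card_cIcc_wrap n i j hji, card_cIcc_wrap n i j' hij]
      omega

lemma pair_out (hx : x ⊆ Finset.Icc 1 n) (hk : x.card = k) (hn2 : n ≤ 2 * k)
    (j : ℕ) (hj1 : 1 ≤ j) (hjn : j ≤ n) (hjx : j ∉ x) (hsj : sgv n x j = 2) :
    ∃ i, i ∈ x ∧ sgv n x i = 2 ∧ pf x (i-1) = pf x j + pf x n ∧
      IsCPairOut n x j i := by
  have hT : pf x n = 2 * (k : ℤ) - n := pf_n n k x hx hk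
  have hjneg : pf x j ≤ -1 := by
    have := (starOut_iff n x j hjx hj1).1 hsj 0 (by omega)
    rw [pf_zero] at this; omega
  have hv1 : mv n x ≤ pf x j + pf x n := by
    have := mv_le n x j hjn; omega
  obtain ⟨i, hix, hiv, his, hmax⟩ :=
    exists_starIn n k x hx hk hn2 (pf x j + pf x n) hv1 (by omega)
  have hib : 1 ≤ i ∧ i ≤ n := by have := hx hix; rw [Finset.mem_Icc] at this; omega
  have hji : j < i := sep n x hx i j hix his hj1 hjn hjx hsj
  refine ⟨i, hix, his, hiv, Finset.mem_Icc.2 ⟨hib.1, hib.2⟩, ?_, ?_⟩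
  · rw [ccfun_wrap n x i j hji hib.1 hib.2]; omega
  · intro i' hi' h0'
    rw [Finset.mem_Icc] at hi'
    rcases le_or_gt i' j with hij | hij
    · exfalso
      rcases Nat.eq_or_lt_of_le hij with he | hlt'
      · rw [he, ccfun_linear n x j j le_rfl, cfun_self_notmem x j hj1 hjx] at h0'; omega
      · rw [ccfun_linear n x i' j hij] at h0'
        exact ((sgv_out_iff n x j hjx).1 hsj) ⟨i', Finset.mem_Ico.2 ⟨hi'.1, hlt'⟩, h0'⟩
    · rw [ccfun_wrap n x i' j hij hi'.1 hi'.2] at h0'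
      have : i' - 1 ≤ i - 1 := hmax (i'-1) (by omega) (by omega)
      rw [card_cIcc_wrap n i j hji, card_cIcc_wrap n i' j hij]
      omega

open Classical in
lemma card_cstar (hx : x ⊆ Finset.Icc 1 n) (hk : x.card = k) (hn2 : n ≤ 2 * k) :
    (((Finset.Icc 1 n).filter (fun i => CStar n x i)).card : ℤ) = pf x n := by
  have hT : pf x n = 2 * (k : ℤ) - n := pf_n n k x hx hk
  set B := (Finset.Icc 1 n).filter (fun i => CStar n x i) with hB
  have hmemB : ∀ i ∈ B, i ∈ x ∧ sgv n x i = 2 ∧ pf x (i-1) - pf x n < mv n x := by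
    intro i hi
    rw [hB, Finset.mem_filter, Finset.mem_Icc] at hi
    obtain ⟨⟨hi1, hin⟩, hcs⟩ := hi
    rcases hcs with ⟨hix, hno⟩ | ⟨hix, hno⟩
    · have hsi : sgv n x i = 2 := by
        rw [sgv_in_iff n x i hix]
        rintro ⟨j, hjm, h0⟩
        rw [Finset.mem_Ioc] at hjm
        exact hno ⟨j, Finset.mem_Icc.2 ⟨by omega, hjm.2⟩,
          by rw [ccfun_linear n x i j (by omega)]; exact h0⟩
      refine ⟨hix, hsi, ?_⟩
      by_contra hge
      push_neg at hge
      obtain ⟨j, hj1, hjn, -, -, -, hjm, h0, -⟩ :=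
        pair_in n k x hx hk hn2 i hix hsi hge
      exact hno ⟨j, hjm, h0⟩
    · exfalso
      have hsi : sgv n x i = 2 := by
        rw [sgv_out_iff n x i hix]
        rintro ⟨i', him, h0⟩
        rw [Finset.mem_Ico] at him
        exact hno ⟨i', Finset.mem_Icc.2 ⟨him.1, by omega⟩,
          by rw [ccfun_linear n x i' i (by omega)]; exact h0⟩
      obtain ⟨i', -, -, -, him, h0, -⟩ :=
        pair_out n k x hx hk hn2 i hi1 hin hix hsi
      exact hno ⟨i', him, h0⟩
  have hsubB : ∀ i, i ∈ x → sgv n x i = 2 → pf x (i-1) - pf x n < mv n x → i ∈ B := by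
    intro i hix hsi hlt
    rw [hB, Finset.mem_filter]
    exact ⟨hx hix, cstar_of n x hx i hix hsi hlt⟩
  have hinj : Set.InjOn (fun m => pf x (m-1)) ↑B := by
    intro p hp q hq e
    rw [Finset.mem_coe] at hp hq
    obtain ⟨hp1, hp2, -⟩ := hmemB p hp
    obtain ⟨hq1, hq2, -⟩ := hmemB q hq
    by_contra hne
    rcases Nat.lt_or_ge p q with h | h
    · have := starIn_mono n x hx p q hp1 hp2 hq1 hq2 h; simp only at e; omega
    · have hqp : q < p := by omega
      have := starIn_mono n x hx q p hq1 hq2 hp1 hp2 hqp; simp only at e; omega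
  have himg : B.image (fun m => pf x (m-1)) =
      Finset.Icc (mv n x) (mv n x + pf x n - 1) := by
    ext v
    rw [Finset.mem_image, Finset.mem_Icc]
    constructor
    · rintro ⟨m, hm, rfl⟩
      obtain ⟨hmx, hms, hmlt⟩ := hmemB m hm
      have hmb : 1 ≤ m ∧ m ≤ n := by have := hx hmx; rw [Finset.mem_Icc] at this; omega
      exact ⟨mv_le n x (m-1) (by omega), by omega⟩
    · rintro ⟨h1, h2⟩
      have hmv0 := mv_nonpos n x
      obtain ⟨i, hix, hiv, his, -⟩ := exists_starIn n k x hx hk hn2 v h1 (by omega)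
      exact ⟨i, hsubB i hix his (by omega), hiv⟩
  have := Finset.card_image_of_injOn hinj
  rw [himg, Int.card_Icc] at this
  have hTn : (0:ℤ) ≤ pf x n := by omega
  omega

end Main
end Aux16


open Classical in
/-- relation between the linear and circular signatures for
`x ∈ [n]^(k)`, `n/2 ≤ k ≤ n`. Writing `i₁ < ... < i_t` for `*(x) ∩ x` and
`j₁ < ... < j_{t-2k+n}` for `*(x) \ x` (an element `i` of `*(x) ∩ x` is `i_r` where
`r` is the number of elements of `*(x) ∩ x` that are `≤ i`, and similarly for the
`j`'s): for `r ≤ 2k-n` one has `csg(x)_{i_r} = *` (and `|*'(x)| = 2k - n`); for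
`r > 2k-n`, `csg(x)_{i_r} = 1` with circular pair `j_{t+1-r}`; and
`csg(x)_{j_s} = 0` with circular pair `i_{t+1-s}`. At non-starred positions the
circular signature and pairs agree with the linear ones. -/
theorem stmt_16 (n k : ℕ) (x : Finset ℕ) (hx : x ⊆ Finset.Icc 1 n)
    (hk : x.card = k) (hn2 : n ≤ 2 * k) :
    -- behavior of starred positions inside x
    (∀ i ∈ x, sgv n x i = 2 →
      ((((x.filter (fun m => sgv n x m = 2)).filter (fun m => m ≤ i)).card ≤ 2 * k - n →
          CStar n x i) ∧
       (2 * k - n < ((x.filter (fun m => sgv n x m = 2)).filter (fun m => m ≤ i)).card →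
          ∃ j ∈ Finset.Icc 1 n, j ∉ x ∧ sgv n x j = 2 ∧
            ((((Finset.Icc 1 n).filter (fun m => sgv n x m = 2 ∧ m ∉ x)).filter
                (fun m => m ≤ j)).card +
              ((x.filter (fun m => sgv n x m = 2)).filter (fun m => m ≤ i)).card =
              (x.filter (fun m => sgv n x m = 2)).card + 1) ∧
            IsCPairIn n x i j))) ∧
    -- behavior of starred positions outside x
    (∀ j ∈ Finset.Icc 1 n, j ∉ x → sgv n x j = 2 →
      ∃ i ∈ x, sgv n x i = 2 ∧
        (((x.filter (fun m => sgv n x m = 2)).filter (fun m => m ≤ i)).card +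
          (((Finset.Icc 1 n).filter (fun m => sgv n x m = 2 ∧ m ∉ x)).filter
            (fun m => m ≤ j)).card =
          (x.filter (fun m => sgv n x m = 2)).card + 1) ∧
        IsCPairOut n x j i) ∧
    -- |*'(x)| = 2k - n
    {i | i ∈ Finset.Icc 1 n ∧ CStar n x i}.ncard + n = 2 * k ∧
    -- agreement at non-starred positions
    (∀ i ∈ Finset.Icc 1 n, sgv n x i ≠ 2 →
      (i ∈ x → ∀ j, IsLeast {j' | i < j' ∧ j' ≤ n ∧ cfun x i j' = 0} j →
        IsCPairIn n x i j) ∧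
      (i ∉ x → ∀ j, IsGreatest {j' | 1 ≤ j' ∧ j' < i ∧ cfun x j' i = 0} j →
        IsCPairOut n x i j)) := by
  classical
  have hT : Aux16.pf x n = 2 * (k : ℤ) - n := Aux16.pf_n n k x hx hk
  refine ⟨?_, ?_, ?_, ?_⟩
  · -- part 1
    intro i hi hsi
    have hib : 1 ≤ i ∧ i ≤ n := by have := hx hi; rw [Finset.mem_Icc] at this; omega
    have hr := Aux16.card_r n k x hx hk hn2 i hi hsi
    constructor
    · intro hle
      apply Aux16.cstar_of n x hx i hi hsi
      omega
    · intro hgt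
      have hge : Aux16.mv n x ≤ Aux16.pf x (i-1) - Aux16.pf x n := by omega
      obtain ⟨j, hj1, hjn, hjx, hjs, hjv, hpair⟩ :=
        Aux16.pair_in n k x hx hk hn2 i hi hsi hge
      refine ⟨j, Finset.mem_Icc.2 ⟨hj1, hjn⟩, hjx, hjs, ?_, hpair⟩
      have hs := Aux16.card_s n k x hx hk hn2 j hj1 hjn hjx hjs
      have ht := Aux16.card_starIn n k x hx hk hn2
      omega
  · -- part 2
    intro j hjm hjx hjs
    rw [Finset.mem_Icc] at hjm
    obtain ⟨i, hix, his, hiv, hpair⟩ :=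
      Aux16.pair_out n k x hx hk hn2 j hjm.1 hjm.2 hjx hjs
    refine ⟨i, hix, his, ?_, hpair⟩
    have hs := Aux16.card_s n k x hx hk hn2 j hjm.1 hjm.2 hjx hjs
    have hr := Aux16.card_r n k x hx hk hn2 i hix his
    have ht := Aux16.card_starIn n k x hx hk hn2
    omega
  · -- part 3
    have hset : {i | i ∈ Finset.Icc 1 n ∧ CStar n x i} =
        ↑((Finset.Icc 1 n).filter (fun i => CStar n x i)) := by
      ext i
      simp [Finset.mem_filter]
    rw [hset, Set.ncard_coe_finset]
    have := Aux16.card_cstar n k x hx hk hn2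
    omega
  · -- part 4
    intro i him hsne
    rw [Finset.mem_Icc] at him
    constructor
    · intro hix j hj
      obtain ⟨hmem, hlb⟩ := hj
      simp only [Set.mem_setOf_eq] at hmem
      obtain ⟨hij, hjn, h0⟩ := hmem
      refine ⟨Finset.mem_Icc.2 ⟨by omega, hjn⟩,
        by rw [Aux16.ccfun_linear n x i j (by omega)]; exact h0, ?_⟩
      intro j' hj' h0'
      rw [Finset.mem_Icc] at hj'
      rcases le_or_gt i j' with h | h
      · have hne : i ≠ j' := by
          intro e
          rw [← e, Aux16.ccfun_linear n x i i le_rfl,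
            Aux16.cfun_self_mem x i (by omega) hix] at h0'
          omega
        have hle : j ≤ j' := hlb ⟨by omega, hj'.2,
          by rw [← Aux16.ccfun_linear n x i j' h]; exact h0'⟩
        rw [Aux16.card_cIcc_linear n i j (by omega), Aux16.card_cIcc_linear n i j' h]
        omega
      · rw [Aux16.card_cIcc_linear n i j (by omega), Aux16.card_cIcc_wrap n i j' h]
        omega
    · intro hix j hj
      obtain ⟨hmem, hub⟩ := hj
      simp only [Set.mem_setOf_eq] at hmem
      obtain ⟨hj1, hji, h0⟩ := hmem
      refine ⟨Finset.mem_Icc.2 ⟨hj1, by omega⟩,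
        by rw [Aux16.ccfun_linear n x j i (by omega)]; exact h0, ?_⟩
      intro j' hj' h0'
      rw [Finset.mem_Icc] at hj'
      rcases le_or_gt j' i with h | h
      · have hne : j' ≠ i := by
          intro e
          rw [e, Aux16.ccfun_linear n x i i le_rfl,
            Aux16.cfun_self_notmem x i (by omega) hix] at h0'
          omega
        have hle : j' ≤ j := hub ⟨hj'.1, by omega,
          by rw [← Aux16.ccfun_linear n x j' i (by omega)]; exact h0'⟩
        rw [Aux16.card_cIcc_linear n j i (by omega),
          Aux16.card_cIcc_linear n j' i (by omega)]
        omega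
      · rw [Aux16.card_cIcc_linear n j i (by omega), Aux16.card_cIcc_wrap n j' i h]
        omega
end
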